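/- arXiv:1801.07602 — 3 statements merged into one kernel-verified Lean document; each statement's English description precedes it below -/
import Mathlib

section
/- Let (X,⊲,⊳) be a biquandle and Y a nonempty set with a map * : Y×X→Y such that y↦y*a is a bijection of Y for each a∈X and (y*a)*(b⊳a) = (y*b)*(a⊲b) for all y∈Y, a,b∈X. Then there is a unique family of maps *^[n] : Y×X→Y (n∈ℤ) satisfying y*^[0]x = y, y*^[1]x = y*x, and y*^[i+j]x = (y*^[i]x)*^[j](x⊲^[i]x) for all i,j∈ℤ; moreover Y is an (X×ℤ)-set of the associated multiple conjugation biquandle X×ℤ via y*(x,n) = y*^[n]x. -/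
/-- A biquandle structure on a type `X`, with under-operation `bu` (`x ⊲ y`)
and over-operation `bo` (`x ⊳ y`). -/
structure IsBiquandle {X : Type u} (bu bo : X → X → X) : Prop where
  b1 : ∀ x, bu x x = bo x x
  b2u : ∀ a, Function.Bijective (fun x => bu x a)
  b2o : ∀ a, Function.Bijective (fun x => bo x a)
  b2s : Function.Bijective (fun p : X × X => (bo p.2 p.1, bu p.1 p.2))
  b3uu : ∀ x y z, bu (bu x y) (bu z y) = bu (bu x z) (bo y z)
  b3ou : ∀ x y z, bo (bu x y) (bu z y) = bu (bo x z) (bo y z)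
  b3oo : ∀ x y z, bo (bo x y) (bo z y) = bo (bo x z) (bu y z)

/-- The defining recurrences of the parallel biquandle operations
`pu n = ⊲^[n]`, `po n = ⊳^[n]`. -/
def IsParallelOps {X : Type u} (bu bo : X → X → X) (pu po : ℤ → X → X → X) : Prop :=
  (∀ a b, pu 0 a b = a) ∧ (∀ a b, pu 1 a b = bu a b) ∧
  (∀ i j a b, pu (i + j) a b = pu j (pu i a b) (pu i b b)) ∧
  (∀ a b, po 0 a b = a) ∧ (∀ a b, po 1 a b = bo a b) ∧
  (∀ i j a b, po (i + j) a b = po j (po i a b) (po i b b))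

/-- A `G`-family of biquandles on `X`: `fu g x y = x ⊲^g y`, `fo g x y = x ⊳^g y`. -/
structure IsGFamily (G : Type v) [Group G] {X : Type u} (fu fo : G → X → X → X) : Prop where
  ax1 : ∀ (g h : G) (x y z : X),
    fu h (fu g x y) (fo g z y) = fu (h⁻¹ * g * h) (fu h x z) (fu h y z)
  ax2 : ∀ (g h : G) (x y z : X),
    fu h (fo g x y) (fo g z y) = fo (h⁻¹ * g * h) (fu h x z) (fu h y z)
  ax3 : ∀ (g h : G) (x y z : X),
    fo h (fo g x y) (fo g z y) = fo (h⁻¹ * g * h) (fo h x z) (fu h y z)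
  ax4 : ∀ (g h : G) (x y : X), fu (g * h) x y = fu h (fu g x y) (fu g y y)
  ax5 : ∀ x y : X, fu 1 x y = x
  ax6 : ∀ (g h : G) (x y : X), fo (g * h) x y = fo h (fo g x y) (fo g y y)
  ax7 : ∀ x y : X, fo 1 x y = x
  ax8 : ∀ (g : G) (x : X), fu g x x = fo g x x

/-- A multiple conjugation biquandle structure on the disjoint union `Σ l, G l`
of the groups `G l`, with operations `und` (`⊲`) and `ovr` (`⊳`). -/
structure IsMCB {Λ : Type u} (G : Λ → Type v) [∀ l, Group (G l)]
    (und ovr : (Σ l, G l) → (Σ l, G l) → (Σ l, G l)) : Prop where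
  ex_uu : ∀ x y z, und (und x y) (und z y) = und (und x z) (ovr y z)
  ex_ou : ∀ x y z, ovr (und x y) (und z y) = und (ovr x z) (ovr y z)
  ex_oo : ∀ x y z, ovr (ovr x y) (ovr z y) = ovr (ovr x z) (und y z)
  hom_und : ∀ (l : Λ) (x : Σ l, G l),
    ∃ (m : Λ) (f : G l →* G m), ∀ a : G l, und ⟨l, a⟩ x = ⟨m, f a⟩
  hom_ovr : ∀ (l : Λ) (x : Σ l, G l),
    ∃ (m : Λ) (f : G l →* G m), ∀ a : G l, ovr ⟨l, a⟩ x = ⟨m, f a⟩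
  und_mul : ∀ (l : Λ) (a b : G l) (x : Σ l, G l),
    und x ⟨l, a * b⟩ = und (und x ⟨l, a⟩) (ovr ⟨l, b⟩ ⟨l, a⟩)
  und_one : ∀ (l : Λ) (x : Σ l, G l), und x ⟨l, 1⟩ = x
  ovr_mul : ∀ (l : Λ) (a b : G l) (x : Σ l, G l),
    ovr x ⟨l, a * b⟩ = ovr (ovr x ⟨l, a⟩) (ovr ⟨l, b⟩ ⟨l, a⟩)
  ovr_one : ∀ (l : Λ) (x : Σ l, G l), ovr x ⟨l, 1⟩ = x
  conj : ∀ (l : Λ) (a b : G l), ovr ⟨l, a⁻¹ * b⟩ ⟨l, a⟩ = und ⟨l, b * a⁻¹⟩ ⟨l, a⟩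

/-- An `X`-set structure `act` (`*`) on `Y` for a multiple conjugation biquandle. -/
structure IsMCBAction {Λ : Type u} (G : Λ → Type v) [∀ l, Group (G l)]
    (und ovr : (Σ l, G l) → (Σ l, G l) → (Σ l, G l))
    {Y : Type w} (act : Y → (Σ l, G l) → Y) : Prop where
  act_one : ∀ (y : Y) (l : Λ), act y ⟨l, 1⟩ = y
  act_mul : ∀ (y : Y) (l : Λ) (a b : G l),
    act y ⟨l, a * b⟩ = act (act y ⟨l, a⟩) (ovr ⟨l, b⟩ ⟨l, a⟩)
  act_ex : ∀ (y : Y) (a b : Σ l, G l),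
    act (act y a) (ovr b a) = act (act y b) (und a b)










/-- The defining recurrences of the parallel action `pact n = *^[n]`. -/
def IsParallelAct {X : Type u} {Y : Type w} (bact : Y → X → Y)
    (pu : ℤ → X → X → X) (pact : ℤ → Y → X → Y) : Prop :=
  (∀ y x, pact 0 y x = y) ∧ (∀ y x, pact 1 y x = bact y x) ∧
  (∀ (i j : ℤ) (y : Y) (x : X), pact (i + j) y x = pact j (pact i y x) (pu i x x))

namespace Stmt9Aux

theorem self_eq {X : Type*} {bu bo : X → X → X} {pu po : ℤ → X → X → X}
    (hbq : IsBiquandle bu bo) (hp : IsParallelOps bu bo pu po) :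
    ∀ (n : ℤ) (a : X), pu n a a = po n a a := by
  obtain ⟨hu0, hu1, huA, ho0, ho1, hoA⟩ := hp
  have hinj : ∀ z w : X, bu z z = bu w w → z = w := by
    intro z w h
    have h2 : (fun p : X × X => (bo p.2 p.1, bu p.1 p.2)) (z, z)
        = (fun p : X × X => (bo p.2 p.1, bu p.1 p.2)) (w, w) := by
      simp only [← hbq.b1, h]
    exact congrArg Prod.fst (hbq.b2s.injective h2)
  intro n
  induction n using Int.induction_on with
  | zero => intro a; rw [hu0, ho0]
  | succ i ih =>
      intro a
      have h1 : pu (i + 1) a a = bu (pu i a a) (pu i a a) := by rw [huA, hu1]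
      have h2 : po (i + 1) a a = bo (po i a a) (po i a a) := by rw [hoA, ho1]
      rw [h1, h2, ih, ← hbq.b1]
  | pred i ih =>
      intro a
      have e1 : (-(i : ℤ) - 1) + 1 = -(i : ℤ) := by ring
      have h1 : pu ((-(i:ℤ) - 1) + 1) a a = bu (pu (-(i:ℤ)-1) a a) (pu (-(i:ℤ)-1) a a) := by
        rw [huA, hu1]
      have h2 : po ((-(i:ℤ) - 1) + 1) a a = bo (po (-(i:ℤ)-1) a a) (po (-(i:ℤ)-1) a a) := by
        rw [hoA, ho1]
      rw [e1] at h1 h2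
      exact hinj _ _ (by rw [← h1, ih a, h2, ← hbq.b1])

/-- The three exchange identities of a `ℤ`-family at parameters `g`, `h`. -/
def GA {X : Type*} (bu bo : X → X → X) (pu po : ℤ → X → X → X) (g h : ℤ) : Prop :=
  (∀ x y z : X, pu h (pu g x y) (po g z y) = pu g (pu h x z) (pu h y z)) ∧
  (∀ x y z : X, pu h (po g x y) (po g z y) = po g (pu h x z) (pu h y z)) ∧
  (∀ x y z : X, po h (po g x y) (po g z y) = po g (po h x z) (pu h y z))

variable {X : Type*} {bu bo : X → X → X} {pu po : ℤ → X → X → X}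

theorem ga_zero_g (hp : IsParallelOps bu bo pu po) (h : ℤ) : GA bu bo pu po 0 h := by
  obtain ⟨hu0, hu1, huA, ho0, ho1, hoA⟩ := hp
  exact ⟨fun x y z => by rw [hu0, ho0, hu0],
         fun x y z => by rw [ho0, ho0, ho0],
         fun x y z => by rw [ho0, ho0, ho0]⟩

theorem ga_g_zero (hp : IsParallelOps bu bo pu po) (g : ℤ) : GA bu bo pu po g 0 := by
  obtain ⟨hu0, hu1, huA, ho0, ho1, hoA⟩ := hp
  exact ⟨fun x y z => by rw [hu0, hu0, hu0],
         fun x y z => by rw [hu0, hu0, hu0],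
         fun x y z => by rw [ho0, ho0, hu0]⟩

theorem ga_one_one (hbq : IsBiquandle bu bo) (hp : IsParallelOps bu bo pu po) :
    GA bu bo pu po 1 1 := by
  obtain ⟨hu0, hu1, huA, ho0, ho1, hoA⟩ := hp
  refine ⟨fun x y z => ?_, fun x y z => ?_, fun x y z => ?_⟩ <;> simp only [hu1, ho1]
  · exact (hbq.b3uu x z y).symm
  · exact (hbq.b3ou x z y).symm
  · exact hbq.b3oo x y z

theorem ga_comp_left (hbq : IsBiquandle bu bo) (hp : IsParallelOps bu bo pu po)
    {g k h : ℤ} (Hg : GA bu bo pu po g h) (Hk : GA bu bo pu po k h) :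
    GA bu bo pu po (g + k) h := by
  have hself := self_eq hbq hp
  obtain ⟨hu0, hu1, huA, ho0, ho1, hoA⟩ := hp
  obtain ⟨Hg1, Hg2, Hg3⟩ := Hg
  obtain ⟨Hk1, Hk2, Hk3⟩ := Hk
  refine ⟨fun x y z => ?_, fun x y z => ?_, fun x y z => ?_⟩
  · calc pu h (pu (g + k) x y) (po (g + k) z y)
        = pu h (pu k (pu g x y) (pu g y y)) (po k (po g z y) (pu g y y)) := by
          rw [huA g k x y, hoA g k z y, ← hself g y]
      _ = pu k (pu h (pu g x y) (po g z y)) (pu h (pu g y y) (po g z y)) :=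
          Hk1 (pu g x y) (pu g y y) (po g z y)
      _ = pu k (pu g (pu h x z) (pu h y z)) (pu g (pu h y z) (pu h y z)) := by
          rw [Hg1 x y z, Hg1 y y z]
      _ = pu (g + k) (pu h x z) (pu h y z) := (huA g k _ _).symm
  · calc pu h (po (g + k) x y) (po (g + k) z y)
        = pu h (po k (po g x y) (po g y y)) (po k (po g z y) (po g y y)) := by
          rw [hoA g k x y, hoA g k z y]
      _ = po k (pu h (po g x y) (po g z y)) (pu h (po g y y) (po g z y)) :=
          Hk2 (po g x y) (po g y y) (po g z y)
      _ = po k (po g (pu h x z) (pu h y z)) (po g (pu h y z) (pu h y z)) := by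
          rw [Hg2 x y z, Hg2 y y z]
      _ = po (g + k) (pu h x z) (pu h y z) := (hoA g k _ _).symm
  · calc po h (po (g + k) x y) (po (g + k) z y)
        = po h (po k (po g x y) (po g y y)) (po k (po g z y) (po g y y)) := by
          rw [hoA g k x y, hoA g k z y]
      _ = po k (po h (po g x y) (po g z y)) (pu h (po g y y) (po g z y)) :=
          Hk3 (po g x y) (po g y y) (po g z y)
      _ = po k (po g (po h x z) (pu h y z)) (po g (pu h y z) (pu h y z)) := by
          rw [Hg3 x y z, Hg2 y y z]
      _ = po (g + k) (po h x z) (pu h y z) := (hoA g k _ _).symm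

theorem ga_comp_right (hbq : IsBiquandle bu bo) (hp : IsParallelOps bu bo pu po)
    {g h j : ℤ} (Hh : GA bu bo pu po g h) (Hj : GA bu bo pu po g j) :
    GA bu bo pu po g (h + j) := by
  have hself := self_eq hbq hp
  obtain ⟨hu0, hu1, huA, ho0, ho1, hoA⟩ := hp
  obtain ⟨Hh1, Hh2, Hh3⟩ := Hh
  obtain ⟨Hj1, Hj2, Hj3⟩ := Hj
  refine ⟨fun x y z => ?_, fun x y z => ?_, fun x y z => ?_⟩
  · calc pu (h + j) (pu g x y) (po g z y)
        = pu j (pu h (pu g x y) (po g z y)) (pu h (po g z y) (po g z y)) := huA h j _ _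
      _ = pu j (pu g (pu h x z) (pu h y z)) (po g (pu h z z) (pu h y z)) := by
          rw [Hh1 x y z, Hh2 z y z]
      _ = pu g (pu j (pu h x z) (pu h z z)) (pu j (pu h y z) (pu h z z)) :=
          Hj1 (pu h x z) (pu h y z) (pu h z z)
      _ = pu g (pu (h + j) x z) (pu (h + j) y z) := by rw [← huA h j x z, ← huA h j y z]
  · calc pu (h + j) (po g x y) (po g z y)
        = pu j (pu h (po g x y) (po g z y)) (pu h (po g z y) (po g z y)) := huA h j _ _
      _ = pu j (po g (pu h x z) (pu h y z)) (po g (pu h z z) (pu h y z)) := by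
          rw [Hh2 x y z, Hh2 z y z]
      _ = po g (pu j (pu h x z) (pu h z z)) (pu j (pu h y z) (pu h z z)) :=
          Hj2 (pu h x z) (pu h y z) (pu h z z)
      _ = po g (pu (h + j) x z) (pu (h + j) y z) := by rw [← huA h j x z, ← huA h j y z]
  · calc po (h + j) (po g x y) (po g z y)
        = po j (po h (po g x y) (po g z y)) (po h (po g z y) (po g z y)) := hoA h j _ _
      _ = po j (po g (po h x z) (pu h y z)) (po g (po h z z) (pu h y z)) := by
          rw [Hh3 x y z, Hh3 z y z]
      _ = po g (po j (po h x z) (po h z z)) (pu j (pu h y z) (po h z z)) :=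
          Hj3 (po h x z) (pu h y z) (po h z z)
      _ = po g (po (h + j) x z) (pu (h + j) y z) := by
          rw [← hoA h j x z, ← hself h z, ← huA h j y z]


theorem ga_neg_one_one (hbq : IsBiquandle bu bo) (hp : IsParallelOps bu bo pu po) :
    GA bu bo pu po (-1) 1 := by
  have hself := self_eq hbq hp
  obtain ⟨hu0, hu1, huA, ho0, ho1, hoA⟩ := hp
  have B1 : ∀ x y z : X, bu (bu x y) (bo z y) = bu (bu x z) (bu y z) :=
    fun x y z => (hbq.b3uu x z y).symm
  have B2 : ∀ x y z : X, bu (bo x y) (bo z y) = bo (bu x z) (bu y z) :=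
    fun x y z => (hbq.b3ou x z y).symm
  have B3 : ∀ x y z : X, bo (bo x y) (bo z y) = bo (bo x z) (bu y z) := hbq.b3oo
  have puc : ∀ a b : X, bu (pu (-1) a b) (pu (-1) b b) = a := by
    intro a b
    have h := huA (-1) 1 a b
    rw [show (-1 : ℤ) + 1 = 0 from by norm_num, hu0, hu1] at h
    exact h.symm
  have poc : ∀ a b : X, bo (po (-1) a b) (po (-1) b b) = a := by
    intro a b
    have h := hoA (-1) 1 a b
    rw [show (-1 : ℤ) + 1 = 0 from by norm_num, ho0, ho1] at h
    exact h.symm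
  have keyu : ∀ A B : X, pu (-1) (bu A B) (bu B B) = A := by
    intro A B
    have h := huA 1 (-1) A B
    rw [show (1 : ℤ) + -1 = 0 from by norm_num, hu0, hu1, hu1] at h
    exact h.symm
  have keyo : ∀ A B : X, po (-1) (bo A B) (bo B B) = A := by
    intro A B
    have h := hoA 1 (-1) A B
    rw [show (1 : ℤ) + -1 = 0 from by norm_num, ho0, ho1, ho1] at h
    exact h.symm
  refine ⟨fun x y z => ?_, fun x y z => ?_, fun x y z => ?_⟩ <;> simp only [hu1, ho1]
  · have f2 : bo (po (-1) z y) (pu (-1) y y) = z := by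
      rw [hself (-1) y]; exact poc z y
    have i1 : bu x z
        = bu (bu (pu (-1) x y) (po (-1) z y)) (bu (pu (-1) y y) (po (-1) z y)) := by
      conv_lhs => rw [← puc x y, ← f2]
      exact B1 _ _ _
    have i2 : bu y z
        = bu (bu (pu (-1) y y) (po (-1) z y)) (bu (pu (-1) y y) (po (-1) z y)) := by
      conv_lhs => rw [← puc y y, ← f2]
      exact B1 _ _ _
    rw [i1, i2, keyu]
  · have hbuYY : bu (po (-1) y y) (po (-1) y y) = y := by
      rw [← hself (-1) y]; exact puc y y
    have i1 : bu x z
        = bo (bu (po (-1) x y) (po (-1) z y)) (bu (po (-1) y y) (po (-1) z y)) := by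
      conv_lhs => rw [← poc x y, ← poc z y]
      exact B2 _ _ _
    have i2 : bu y z
        = bu (bu (po (-1) y y) (po (-1) z y)) (bu (po (-1) y y) (po (-1) z y)) := by
      conv_lhs => rw [← hbuYY, ← poc z y]
      exact B1 _ _ _
    have i2' : bu y z
        = bo (bu (po (-1) y y) (po (-1) z y)) (bu (po (-1) y y) (po (-1) z y)) :=
      i2.trans (hbq.b1 _)
    rw [i1, i2', keyo]
  · have hbuYY : bu (po (-1) y y) (po (-1) y y) = y := by
      rw [← hself (-1) y]; exact puc y y
    have i1 : bo x z
        = bo (bo (po (-1) x y) (po (-1) z y)) (bu (po (-1) y y) (po (-1) z y)) := by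
      conv_lhs => rw [← poc x y, ← poc z y]
      exact B3 _ _ _
    have i2 : bu y z
        = bu (bu (po (-1) y y) (po (-1) z y)) (bu (po (-1) y y) (po (-1) z y)) := by
      conv_lhs => rw [← hbuYY, ← poc z y]
      exact B1 _ _ _
    have i2' : bu y z
        = bo (bu (po (-1) y y) (po (-1) z y)) (bu (po (-1) y y) (po (-1) z y)) :=
      i2.trans (hbq.b1 _)
    rw [i1, i2', keyo]

theorem ga_inv_h (hbq : IsBiquandle bu bo) (hp : IsParallelOps bu bo pu po)
    {g : ℤ} (Hg : GA bu bo pu po g 1) : GA bu bo pu po g (-1) := by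
  have hself := self_eq hbq hp
  obtain ⟨hu0, hu1, huA, ho0, ho1, hoA⟩ := hp
  have Hg1 : ∀ x y z : X, bu (pu g x y) (po g z y) = pu g (bu x z) (bu y z) := by
    intro x y z; have h := Hg.1 x y z; simpa only [hu1] using h
  have Hg2 : ∀ x y z : X, bu (po g x y) (po g z y) = po g (bu x z) (bu y z) := by
    intro x y z; have h := Hg.2.1 x y z; simpa only [hu1] using h
  have Hg3 : ∀ x y z : X, bo (po g x y) (po g z y) = po g (bo x z) (bu y z) := by
    intro x y z; have h := Hg.2.2 x y z; simpa only [hu1, ho1] using h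
  have puc : ∀ a b : X, bu (pu (-1) a b) (pu (-1) b b) = a := by
    intro a b
    have h := huA (-1) 1 a b
    rw [show (-1 : ℤ) + 1 = 0 from by norm_num, hu0, hu1] at h
    exact h.symm
  have poc : ∀ a b : X, bo (po (-1) a b) (po (-1) b b) = a := by
    intro a b
    have h := hoA (-1) 1 a b
    rw [show (-1 : ℤ) + 1 = 0 from by norm_num, ho0, ho1] at h
    exact h.symm
  have keyu : ∀ A B : X, pu (-1) (bu A B) (bu B B) = A := by
    intro A B
    have h := huA 1 (-1) A B
    rw [show (1 : ℤ) + -1 = 0 from by norm_num, hu0, hu1, hu1] at h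
    exact h.symm
  have keyo : ∀ A B : X, po (-1) (bo A B) (bo B B) = A := by
    intro A B
    have h := hoA 1 (-1) A B
    rw [show (1 : ℤ) + -1 = 0 from by norm_num, ho0, ho1, ho1] at h
    exact h.symm
  refine ⟨fun x y z => ?_, fun x y z => ?_, fun x y z => ?_⟩
  · -- pu (-1) (pu g x y) (po g z y) = pu g (pu (-1) x z) (pu (-1) y z)
    have i1 : pu g x y
        = bu (pu g (pu (-1) x z) (pu (-1) y z)) (po g (pu (-1) z z) (pu (-1) y z)) := by
      conv_lhs => rw [← puc x z, ← puc y z]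
      exact (Hg1 _ _ _).symm
    have i2 : po g z y
        = bu (po g (pu (-1) z z) (pu (-1) y z)) (po g (pu (-1) z z) (pu (-1) y z)) := by
      conv_lhs => rw [← puc z z, ← puc y z]
      exact (Hg2 _ _ _).symm
    rw [i1, i2, keyu]
  · -- pu (-1) (po g x y) (po g z y) = po g (pu (-1) x z) (pu (-1) y z)
    have i1 : po g x y
        = bu (po g (pu (-1) x z) (pu (-1) y z)) (po g (pu (-1) z z) (pu (-1) y z)) := by
      conv_lhs => rw [← puc x z, ← puc y z]
      exact (Hg2 _ _ _).symm
    have i2 : po g z y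
        = bu (po g (pu (-1) z z) (pu (-1) y z)) (po g (pu (-1) z z) (pu (-1) y z)) := by
      conv_lhs => rw [← puc z z, ← puc y z]
      exact (Hg2 _ _ _).symm
    rw [i1, i2, keyu]
  · -- po (-1) (po g x y) (po g z y) = po g (po (-1) x z) (pu (-1) y z)
    have c2 : bu (pu (-1) y z) (po (-1) z z) = y := by
      rw [← hself (-1) z]; exact puc y z
    have i1 : po g x y
        = bo (po g (po (-1) x z) (pu (-1) y z)) (po g (po (-1) z z) (pu (-1) y z)) := by
      conv_lhs => rw [← poc x z, ← c2]
      exact (Hg3 _ _ _).symm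
    have i2 : po g z y
        = bo (po g (po (-1) z z) (pu (-1) y z)) (po g (po (-1) z z) (pu (-1) y z)) := by
      conv_lhs => rw [← poc z z, ← c2]
      exact (Hg3 _ _ _).symm
    rw [i1, i2, keyo]

theorem ga_all (hbq : IsBiquandle bu bo) (hp : IsParallelOps bu bo pu po) :
    ∀ g h : ℤ, GA bu bo pu po g h := by
  have one : ∀ g : ℤ, GA bu bo pu po g 1 := by
    intro g
    induction g using Int.induction_on with
    | zero => exact ga_zero_g hp 1
    | succ i ih => exact ga_comp_left hbq hp ih (ga_one_one hbq hp)
    | pred i ih =>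
        have h := ga_comp_left hbq hp ih (ga_neg_one_one hbq hp)
        rwa [show -(i : ℤ) + -1 = -(i : ℤ) - 1 from by ring] at h
  have neg : ∀ g : ℤ, GA bu bo pu po g (-1) := fun g => ga_inv_h hbq hp (one g)
  intro g h
  induction h using Int.induction_on with
  | zero => exact ga_g_zero hp g
  | succ i ih => exact ga_comp_right hbq hp ih (one g)
  | pred i ih =>
      have h2 := ga_comp_right hbq hp ih (neg g)
      rwa [show -(i : ℤ) + -1 = -(i : ℤ) - 1 from by ring] at h2



/-- The parallel exchange identity for the action at parameters `m`, `n`. -/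
def EE {X Y : Type*} (pu po : ℤ → X → X → X) (pact : ℤ → Y → X → Y) (m n : ℤ) : Prop :=
  ∀ (y : Y) (x z : X), pact n (pact m y x) (po m z x) = pact m (pact n y z) (pu n x z)

theorem ee_all {X Y : Type*} {bu bo : X → X → X} {pu po : ℤ → X → X → X}
    (hbq : IsBiquandle bu bo) (hp : IsParallelOps bu bo pu po)
    (bact : Y → X → Y)
    (hex : ∀ (y : Y) (a b : X), bact (bact y a) (bo b a) = bact (bact y b) (bu a b))
    (pact : ℤ → Y → X → Y) (hq : IsParallelAct bact pu pact) :
    ∀ (m n : ℤ) (y : Y) (x z : X),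
      pact n (pact m y x) (po m z x) = pact m (pact n y z) (pu n x z) := by
  have hself := self_eq hbq hp
  have hA := ga_all hbq hp
  obtain ⟨hu0, hu1, huA, ho0, ho1, hoA⟩ := hp
  obtain ⟨ha0, ha1, haA⟩ := hq
  have puc : ∀ a b : X, bu (pu (-1) a b) (pu (-1) b b) = a := by
    intro a b
    have h := huA (-1) 1 a b
    rw [show (-1 : ℤ) + 1 = 0 from by norm_num, hu0, hu1] at h
    exact h.symm
  have poc : ∀ a b : X, bo (po (-1) a b) (po (-1) b b) = a := by
    intro a b
    have h := hoA (-1) 1 a b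
    rw [show (-1 : ℤ) + 1 = 0 from by norm_num, ho0, ho1] at h
    exact h.symm
  have pac : ∀ (y : Y) (x : X), bact (pact (-1) y x) (pu (-1) x x) = y := by
    intro y x
    have h := haA (-1) 1 y x
    rw [show (-1 : ℤ) + 1 = 0 from by norm_num, ha0, ha1] at h
    exact h.symm
  have keyact : ∀ (A : Y) (B : X), pact (-1) (bact A B) (bu B B) = A := by
    intro A B
    have h := haA 1 (-1) A B
    rw [show (1 : ℤ) + -1 = 0 from by norm_num, ha0, ha1, hu1] at h
    exact h.symm
  have Em0 : ∀ m : ℤ, EE pu po pact m 0 := by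
    intro m y x z; rw [ha0, ha0, hu0]
  have E0n : ∀ n : ℤ, EE pu po pact 0 n := by
    intro n y x z; rw [ha0, ho0, ha0]
  have E11 : EE pu po pact 1 1 := by
    intro y x z; simp only [ha1, ho1, hu1]; exact hex y x z
  have comp_n : ∀ m n n' : ℤ,
      EE pu po pact m n → EE pu po pact m n' → EE pu po pact m (n + n') := by
    intro m n n' H H' y x z
    calc pact (n + n') (pact m y x) (po m z x)
        = pact n' (pact n (pact m y x) (po m z x)) (pu n (po m z x) (po m z x)) :=
          haA n n' _ _
      _ = pact n' (pact m (pact n y z) (pu n x z)) (po m (pu n z z) (pu n x z)) := by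
          rw [H y x z, (hA m n).2.1 z x z]
      _ = pact m (pact n' (pact n y z) (pu n z z)) (pu n' (pu n x z) (pu n z z)) :=
          H' _ _ _
      _ = pact m (pact (n + n') y z) (pu (n + n') x z) := by
          rw [← haA n n' y z, ← huA n n' x z]
  have comp_m : ∀ m m' n : ℤ,
      EE pu po pact m n → EE pu po pact m' n → EE pu po pact (m + m') n := by
    intro m m' n H H' y x z
    calc pact n (pact (m + m') y x) (po (m + m') z x)
        = pact n (pact m' (pact m y x) (pu m x x)) (po m' (po m z x) (pu m x x)) := by
          rw [haA m m' y x, hoA m m' z x, ← hself m x]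
      _ = pact m' (pact n (pact m y x) (po m z x)) (pu n (pu m x x) (po m z x)) :=
          H' _ _ _
      _ = pact m' (pact m (pact n y z) (pu n x z)) (pu m (pu n x z) (pu n x z)) := by
          rw [H y x z, (hA m n).1 x x z]
      _ = pact (m + m') (pact n y z) (pu n x z) := (haA m m' _ _).symm
  have inv_n : ∀ m : ℤ, EE pu po pact m 1 → EE pu po pact m (-1) := by
    intro m H y x z
    have c1 : bact (pact (-1) y z) (pu (-1) z z) = y := pac y z
    have c2 : bu (pu (-1) x z) (pu (-1) z z) = x := puc x z
    have c3 : bu (pu (-1) z z) (pu (-1) z z) = z := puc z z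
    have i1 : pact m y x
        = bact (pact m (pact (-1) y z) (pu (-1) x z))
            (po m (pu (-1) z z) (pu (-1) x z)) := by
      have h := H (pact (-1) y z) (pu (-1) x z) (pu (-1) z z)
      simp only [ha1, hu1] at h
      rw [c1, c2] at h
      exact h.symm
    have i2 : po m z x
        = bu (po m (pu (-1) z z) (pu (-1) x z)) (po m (pu (-1) z z) (pu (-1) x z)) := by
      have h := (hA m 1).2.1 (pu (-1) z z) (pu (-1) x z) (pu (-1) z z)
      simp only [hu1] at h
      rw [c3, c2] at h
      exact h.symm
    rw [i1, i2, keyact]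
  have inv_m : ∀ n : ℤ, EE pu po pact 1 n → EE pu po pact (-1) n := by
    intro n H y x z
    have c1 : bact (pact (-1) y x) (pu (-1) x x) = y := pac y x
    have c2 : bo (po (-1) z x) (pu (-1) x x) = z := by
      rw [hself (-1) x]; exact poc z x
    have c3 : bu (pu (-1) x x) (pu (-1) x x) = x := puc x x
    have i1 : pact n y z
        = bact (pact n (pact (-1) y x) (po (-1) z x))
            (pu n (pu (-1) x x) (po (-1) z x)) := by
      have h := H (pact (-1) y x) (pu (-1) x x) (po (-1) z x)
      simp only [ha1, ho1, hu1] at h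
      rw [c1, c2] at h
      exact h
    have i2 : pu n x z
        = bu (pu n (pu (-1) x x) (po (-1) z x)) (pu n (pu (-1) x x) (po (-1) z x)) := by
      have h := (hA 1 n).1 (pu (-1) x x) (pu (-1) x x) (po (-1) z x)
      simp only [hu1, ho1] at h
      rw [c3, c2] at h
      exact h
    rw [i1, i2, keyact]
  have E1 : ∀ n : ℤ, EE pu po pact 1 n := by
    intro n
    induction n using Int.induction_on with
    | zero => exact Em0 1
    | succ i ih => exact comp_n 1 i 1 ih E11
    | pred i ih =>
        have h := comp_n 1 (-i) (-1) ih (inv_n 1 E11)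
        rwa [show -(i : ℤ) + -1 = -(i : ℤ) - 1 from by ring] at h
  have En1 : ∀ n : ℤ, EE pu po pact (-1) n := fun n => inv_m n (E1 n)
  intro m n
  induction m using Int.induction_on with
  | zero => exact E0n n
  | succ i ih => exact comp_m i 1 n ih (E1 n)
  | pred i ih =>
      have h := comp_m (-i) (-1) n ih (En1 n)
      rwa [show -(i : ℤ) + -1 = -(i : ℤ) - 1 from by ring] at h



def tpos {Y : Type*} (f : ℤ → Y ≃ Y) : ℕ → Y ≃ Y
  | 0 => Equiv.refl Y
  | k + 1 => (tpos f k).trans (f (k : ℤ))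

def tneg {Y : Type*} (f : ℤ → Y ≃ Y) : ℕ → Y ≃ Y
  | 0 => Equiv.refl Y
  | k + 1 => (tneg f k).trans (f (-(k : ℤ) - 1)).symm

def tint {Y : Type*} (f : ℤ → Y ≃ Y) : ℤ → Y ≃ Y
  | Int.ofNat k => tpos f k
  | Int.negSucc k => tneg f (k + 1)

theorem tint_zero {Y : Type*} (f : ℤ → Y ≃ Y) : tint f 0 = Equiv.refl Y := rfl

theorem tint_step {Y : Type*} (f : ℤ → Y ≃ Y) (n : ℤ) :
    tint f (n + 1) = (tint f n).trans (f n) := by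
  match n with
  | Int.ofNat k => rfl
  | Int.negSucc 0 =>
      show Equiv.refl Y = ((Equiv.refl Y).trans (f (Int.negSucc 0)).symm).trans (f (Int.negSucc 0))
      rw [Equiv.refl_trans, Equiv.symm_trans_self]
  | Int.negSucc (k + 1) =>
      show tneg f (k + 1)
          = ((tneg f (k + 1)).trans (f (Int.negSucc (k + 1))).symm).trans (f (Int.negSucc (k + 1)))
      rw [Equiv.trans_assoc, Equiv.symm_trans_self, Equiv.trans_refl]

theorem tint_shift {Y : Type*} (f g : ℤ → Y ≃ Y) (i : ℤ) (hfg : ∀ k, g k = f (i + k)) :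
    ∀ j : ℤ, tint g j = (tint f i).symm.trans (tint f (i + j)) := by
  intro j
  induction j using Int.induction_on with
  | zero => rw [add_zero, tint_zero, Equiv.symm_trans_self]
  | succ k ih =>
      rw [tint_step g, ih, hfg, show i + ((k : ℤ) + 1) = (i + (k : ℤ)) + 1 from by ring,
        tint_step f, ← Equiv.trans_assoc]
  | pred k ih =>
      have h1 : tint g (-(k : ℤ)) = (tint g (-(k : ℤ) - 1)).trans (g (-(k : ℤ) - 1)) := by
        have h := tint_step g (-(k : ℤ) - 1)
        rwa [show -(k : ℤ) - 1 + 1 = -(k : ℤ) from by ring] at h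
      have h3 : tint g (-(k : ℤ) - 1) = (tint g (-(k : ℤ))).trans (g (-(k : ℤ) - 1)).symm := by
        rw [h1, Equiv.trans_assoc, Equiv.self_trans_symm, Equiv.trans_refl]
      have h2 : tint f (i + -(k : ℤ))
          = (tint f (i + (-(k : ℤ) - 1))).trans (f (i + (-(k : ℤ) - 1))) := by
        have h := tint_step f (i + (-(k : ℤ) - 1))
        rwa [show i + (-(k : ℤ) - 1) + 1 = i + -(k : ℤ) from by ring] at h
      rw [h3, ih, hfg, h2, Equiv.trans_assoc, Equiv.trans_assoc, Equiv.self_trans_symm,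
        Equiv.trans_refl]

noncomputable def Fop {X Y : Type*} (bact : Y → X → Y) (hbij : ∀ a : X, Function.Bijective fun y => bact y a)
    (pu : ℤ → X → X → X) (x : X) (k : ℤ) : Y ≃ Y :=
  Equiv.ofBijective (fun y => bact y (pu k x x)) (hbij _)



end Stmt9Aux

/-- STATEMENT 9 -/
theorem stmt9 {X : Type u} {Y : Type w} [Nonempty X] [Nonempty Y]
    (bu bo : X → X → X) (hbq : IsBiquandle bu bo)
    (bact : Y → X → Y) (hbij : ∀ a : X, Function.Bijective (fun y => bact y a))
    (hex : ∀ (y : Y) (a b : X), bact (bact y a) (bo b a) = bact (bact y b) (bu a b))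
    (pu po : ℤ → X → X → X) (hp : IsParallelOps bu bo pu po) :
    (∃! pact : ℤ → Y → X → Y, IsParallelAct bact pu pact) ∧
    (∀ pact : ℤ → Y → X → Y, IsParallelAct bact pu pact →
      IsMCBAction (fun _ : X => Multiplicative ℤ)
        (fun p q => ⟨pu (Multiplicative.toAdd q.2) p.1 q.1, p.2⟩)
        (fun p q => ⟨po (Multiplicative.toAdd q.2) p.1 q.1, p.2⟩)
        (fun y p => pact (Multiplicative.toAdd p.2) y p.1)) := by
  obtain ⟨hu0, hu1, huA, ho0, ho1, hoA⟩ := id hp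
  have hself := Stmt9Aux.self_eq hbq hp
  have hFshift : ∀ (x : X) (i k : ℤ),
      Stmt9Aux.Fop bact hbij pu (pu i x x) k = Stmt9Aux.Fop bact hbij pu x (i + k) := by
    intro x i k
    have hcong : ∀ a b : X, a = b →
        Equiv.ofBijective (fun y => bact y a) (hbij a)
          = Equiv.ofBijective (fun y => bact y b) (hbij b) := by
      intro a b h; subst h; rfl
    unfold Stmt9Aux.Fop
    exact hcong _ _ (huA i k x x).symm
  constructor
  · refine ⟨fun n y x => Stmt9Aux.tint (Stmt9Aux.Fop bact hbij pu x) n y, ⟨?_, ?_, ?_⟩, ?_⟩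
    · intro y x
      show Stmt9Aux.tint (Stmt9Aux.Fop bact hbij pu x) 0 y = y
      rw [Stmt9Aux.tint_zero]; rfl
    · intro y x
      have h := Stmt9Aux.tint_step (Stmt9Aux.Fop bact hbij pu x) 0
      rw [zero_add, Stmt9Aux.tint_zero, Equiv.refl_trans] at h
      show Stmt9Aux.tint (Stmt9Aux.Fop bact hbij pu x) 1 y = bact y x
      rw [h]
      show bact y (pu 0 x x) = bact y x
      rw [hu0]
    · intro i j y x
      show Stmt9Aux.tint (Stmt9Aux.Fop bact hbij pu x) (i + j) y
          = Stmt9Aux.tint (Stmt9Aux.Fop bact hbij pu (pu i x x)) j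
              (Stmt9Aux.tint (Stmt9Aux.Fop bact hbij pu x) i y)
      rw [Stmt9Aux.tint_shift (Stmt9Aux.Fop bact hbij pu x)
        (Stmt9Aux.Fop bact hbij pu (pu i x x)) i (fun k => hFshift x i k) j]
      simp only [Equiv.trans_apply, Equiv.symm_apply_apply]
    · intro q hq'
      funext n y x
      show q n y x = Stmt9Aux.tint (Stmt9Aux.Fop bact hbij pu x) n y
      induction n using Int.induction_on generalizing y x with
      | zero =>
          rw [hq'.1, Stmt9Aux.tint_zero]; rfl
      | succ i ih =>
          have hps : Stmt9Aux.tint (Stmt9Aux.Fop bact hbij pu x) ((i : ℤ) + 1) y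
              = bact (Stmt9Aux.tint (Stmt9Aux.Fop bact hbij pu x) (i : ℤ) y)
                  (pu (i : ℤ) x x) := by
            rw [Stmt9Aux.tint_step]; rfl
          rw [hq'.2.2 (i : ℤ) 1 y x, hq'.2.1, ih, hps]
      | pred i ih =>
          have e1 : (-(i : ℤ) - 1) + 1 = -(i : ℤ) := by ring
          have hqs : q (-(i : ℤ)) y x
              = bact (q (-(i : ℤ) - 1) y x) (pu (-(i : ℤ) - 1) x x) := by
            have h := hq'.2.2 (-(i : ℤ) - 1) 1 y x
            rw [e1] at h
            rw [hq'.2.1] at h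
            exact h
          have hps : Stmt9Aux.tint (Stmt9Aux.Fop bact hbij pu x) (-(i : ℤ)) y
              = bact (Stmt9Aux.tint (Stmt9Aux.Fop bact hbij pu x) (-(i : ℤ) - 1) y)
                  (pu (-(i : ℤ) - 1) x x) := by
            have h := Stmt9Aux.tint_step (Stmt9Aux.Fop bact hbij pu x) (-(i : ℤ) - 1)
            rw [e1] at h
            rw [h]; rfl
          apply (hbij (pu (-(i : ℤ) - 1) x x)).injective
          show bact (q (-(i : ℤ) - 1) y x) (pu (-(i : ℤ) - 1) x x)
              = bact (Stmt9Aux.tint (Stmt9Aux.Fop bact hbij pu x) (-(i : ℤ) - 1) y)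
                  (pu (-(i : ℤ) - 1) x x)
          rw [← hqs, ← hps]
          exact ih y x
  · intro pact hq'
    have hee := Stmt9Aux.ee_all hbq hp bact hex pact hq'
    refine ⟨?_, ?_, ?_⟩
    · intro y l
      show pact (Multiplicative.toAdd (1 : Multiplicative ℤ)) y l = y
      rw [toAdd_one]
      exact hq'.1 y l
    · intro y l a b
      show pact (Multiplicative.toAdd (a * b)) y l
          = pact (Multiplicative.toAdd b) (pact (Multiplicative.toAdd a) y l)
              (po (Multiplicative.toAdd a) l l)
      rw [toAdd_mul, ← hself (Multiplicative.toAdd a) l]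
      exact hq'.2.2 _ _ y l
    · intro y a b
      obtain ⟨x, m⟩ := a
      obtain ⟨z, n⟩ := b
      exact hee (Multiplicative.toAdd m) (Multiplicative.toAdd n) y x z
end

section
/- Let X be a multiple conjugation biquandle and Y an X-set. For each block index i, let ∂^{(i)} denote the operator on generators of the prismatic chain groups given by ∂^{(i)}(⟨y⟩⟨𝐱₁⟩⋯⟨𝐱_k⟩) = ⟨y⟩⟨𝐱₁⟩⋯∂⟨𝐱_i⟩⋯⟨𝐱_k⟩ (i ≤ k). Then for i ≠ j, ∂^{(i)}∘∂^{(j)} = ∂^{(j)}∘∂^{(i)}; in particular the expression ⟨y⟩⟨𝐱₁⟩⋯∂⟨𝐱_i⟩⋯∂⟨𝐱_j⟩⋯⟨𝐱_k⟩ is well defined. -/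
structure MCB (Λ : Type u) (G : Λ → Type v) [∀ l, Group (G l)] where
  und : (Σ l, G l) → (Σ l, G l) → (Σ l, G l)
  ovr : (Σ l, G l) → (Σ l, G l) → (Σ l, G l)
  prop : IsMCB G und ovr

/-- A block `⟨x₁,…,x_m⟩`: a (possibly empty) tuple of elements of a single
group `G l`. -/
def PBlock (Λ : Type u) (G : Λ → Type v) : Type (max u v) :=
  Σ l : Λ, List (G l)

variable {Λ : Type u} {G : Λ → Type v} [∀ l, Group (G l)]

/-- Entrywise application of `⊲ a` to a block. -/
noncomputable def pBlockUnd (M : MCB Λ G) (a : Σ l, G l) (b : PBlock Λ G) : PBlock Λ G :=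
  ⟨(M.prop.hom_und b.1 a).choose, b.2.map (M.prop.hom_und b.1 a).choose_spec.choose⟩

/-- Entrywise application of `⊳ a` to a block. -/
noncomputable def pBlockOvr (M : MCB Λ G) (a : Σ l, G l) (b : PBlock Λ G) : PBlock Λ G :=
  ⟨(M.prop.hom_ovr b.1 a).choose, b.2.map (M.prop.hom_ovr b.1 a).choose_spec.choose⟩

/-- The operator `∂̃^{(i)}` applied at the `i`-th block (0-based) of a
generator: `⟨y⟩⟨𝐱₁⟩⋯∂̃⟨𝐱_i⟩⋯⟨𝐱_k⟩`. -/
noncomputable def dTildeAt (M : MCB Λ G) {Y : Type w} (act : Y → (Σ l, G l) → Y)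
    (i : ℕ) (g : Y × List (PBlock Λ G)) : FreeAbelianGroup (Y × List (PBlock Λ G)) :=
  if h : i < g.2.length then
    match g.2.get ⟨i, h⟩ with
    | ⟨_, []⟩ => 0
    | ⟨l, x :: rest⟩ =>
        FreeAbelianGroup.of
          (act g.1 ⟨l, x⟩,
           (g.2.take i).map (pBlockUnd M ⟨l, x⟩)
             ++ ⟨(M.prop.hom_ovr l ⟨l, x⟩).choose,
                  rest.map (fun z => (M.prop.hom_ovr l ⟨l, x⟩).choose_spec.choose (x⁻¹ * z))⟩
             :: (g.2.drop (i + 1)).map (pBlockOvr M ⟨l, x⟩))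
  else 0

/-- The operator `∂̂^{(i)}` applied at the `i`-th block (0-based) of a
generator: `⟨y⟩⟨𝐱₁⟩⋯∂̂⟨𝐱_i⟩⋯⟨𝐱_k⟩`. -/
noncomputable def dHatAt {Y : Type w} (i : ℕ) (g : Y × List (PBlock Λ G)) :
    FreeAbelianGroup (Y × List (PBlock Λ G)) :=
  if h : i < g.2.length then
    ∑ j : Fin (g.2.get ⟨i, h⟩).2.length,
      ((-1 : ℤ) ^ ((j : ℕ) + 1)) •
        FreeAbelianGroup.of
          (g.1, g.2.set i ⟨(g.2.get ⟨i, h⟩).1, (g.2.get ⟨i, h⟩).2.eraseIdx (j : ℕ)⟩)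
  else 0

/-- The operator `∂^{(i)} = ∂̃^{(i)} + ∂̂^{(i)}`. -/
noncomputable def dAt (M : MCB Λ G) {Y : Type w} (act : Y → (Σ l, G l) → Y)
    (i : ℕ) (g : Y × List (PBlock Λ G)) : FreeAbelianGroup (Y × List (PBlock Λ G)) :=
  dTildeAt M act i g + dHatAt i g

set_option linter.unusedSectionVars false

namespace Stmt10Aux

open FreeAbelianGroup

theorem map_eraseIdx {α : Type*} {β : Type*} (f : α → β) : ∀ (l : List α) (i : ℕ),
    (l.eraseIdx i).map f = (l.map f).eraseIdx i
  | [], _ => rfl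
  | _ :: _, 0 => rfl
  | a :: l, (i+1) => by
      simp only [List.eraseIdx_cons_succ, List.map_cons, map_eraseIdx f l i]

/-- View a block as a list of elements of the total space. -/
def toL (b : PBlock Λ G) : List (Σ l, G l) := b.2.map (⟨b.1, ·⟩)

theorem pblock_ext {b₁ b₂ : PBlock Λ G} (h1 : b₁.1 = b₂.1) (h2 : toL b₁ = toL b₂) :
    b₁ = b₂ := by
  obtain ⟨l₁, L₁⟩ := b₁
  obtain ⟨l₂, L₂⟩ := b₂
  cases h1
  simp only [toL] at h2
  exact congrArg _ (List.map_injective_iff.mpr sigma_mk_injective h2)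

variable (M : MCB Λ G)

theorem und_spec (l : Λ) (a : Σ l', G l') (c : G l) :
    M.und ⟨l, c⟩ a = ⟨(M.prop.hom_und l a).choose, (M.prop.hom_und l a).choose_spec.choose c⟩ :=
  (M.prop.hom_und l a).choose_spec.choose_spec c

theorem ovr_spec (l : Λ) (a : Σ l', G l') (c : G l) :
    M.ovr ⟨l, c⟩ a = ⟨(M.prop.hom_ovr l a).choose, (M.prop.hom_ovr l a).choose_spec.choose c⟩ :=
  (M.prop.hom_ovr l a).choose_spec.choose_spec c

theorem und_fst_congr {z₁ z₂ : Σ l, G l} (h : z₁.1 = z₂.1) (w : Σ l, G l) :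
    (M.und z₁ w).1 = (M.und z₂ w).1 := by
  obtain ⟨l₁, c₁⟩ := z₁; obtain ⟨l₂, c₂⟩ := z₂
  cases h
  rw [und_spec, und_spec]

theorem ovr_fst_congr {z₁ z₂ : Σ l, G l} (h : z₁.1 = z₂.1) (w : Σ l, G l) :
    (M.ovr z₁ w).1 = (M.ovr z₂ w).1 := by
  obtain ⟨l₁, c₁⟩ := z₁; obtain ⟨l₂, c₂⟩ := z₂
  cases h
  rw [ovr_spec, ovr_spec]

theorem pBlockUnd_fst (a : Σ l, G l) (B : PBlock Λ G) {z : Σ l, G l} (h : z.1 = B.1) :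
    (pBlockUnd M a B).1 = (M.und z a).1 := by
  obtain ⟨l, c⟩ := z
  cases h
  rw [und_spec]
  rfl

theorem pBlockOvr_fst (a : Σ l, G l) (B : PBlock Λ G) {z : Σ l, G l} (h : z.1 = B.1) :
    (pBlockOvr M a B).1 = (M.ovr z a).1 := by
  obtain ⟨l, c⟩ := z
  cases h
  rw [ovr_spec]
  rfl

theorem pBlockUnd_toL (a : Σ l, G l) (B : PBlock Λ G) :
    toL (pBlockUnd M a B) = (toL B).map (fun z => M.und z a) := by
  obtain ⟨l, L⟩ := B
  simp only [toL, pBlockUnd, List.map_map]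
  exact List.map_congr_left fun c _ => (und_spec M l a c).symm

theorem pBlockOvr_toL (a : Σ l, G l) (B : PBlock Λ G) :
    toL (pBlockOvr M a B) = (toL B).map (fun z => M.ovr z a) := by
  obtain ⟨l, L⟩ := B
  simp only [toL, pBlockOvr, List.map_map]
  exact List.map_congr_left fun c _ => (ovr_spec M l a c).symm

/-- The middle block produced by `∂̃` from a block with head `x` and tail `r`. -/
noncomputable def midB (l : Λ) (x : G l) (r : List (G l)) : PBlock Λ G :=
  ⟨(M.prop.hom_ovr l ⟨l, x⟩).choose,
    r.map (fun z => (M.prop.hom_ovr l ⟨l, x⟩).choose_spec.choose (x⁻¹ * z))⟩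

theorem midB_fst (l : Λ) (x : G l) (r : List (G l)) {z : Σ l, G l} (h : z.1 = l) :
    (midB M l x r).1 = (M.ovr z ⟨l, x⟩).1 := by
  obtain ⟨l', c⟩ := z
  cases h
  rw [ovr_spec]
  rfl

theorem midB_toL (l : Λ) (x : G l) (r : List (G l)) :
    toL (midB M l x r) = r.map (fun z => M.ovr ⟨l, x⁻¹ * z⟩ ⟨l, x⟩) := by
  simp only [toL, midB, List.map_map]
  exact List.map_congr_left fun c _ => (ovr_spec M l ⟨l, x⟩ (x⁻¹ * c)).symm

/-- The list part of `∂̃^{(i)}` of a generator. -/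
noncomputable def tf (a : Σ l, G l) (mid : PBlock Λ G) (i : ℕ) (L : List (PBlock Λ G)) :
    List (PBlock Λ G) :=
  (L.take i).map (pBlockUnd M a) ++ mid :: (L.drop (i + 1)).map (pBlockOvr M a)

theorem tf_length (a : Σ l, G l) (mid : PBlock Λ G) {i : ℕ} {L : List (PBlock Λ G)}
    (h : i < L.length) : (tf M a mid i L).length = L.length := by
  simp only [tf, List.length_append, List.length_map, List.length_take, List.length_cons,
    List.length_drop]
  omega

theorem tf_getElem? (a : Σ l, G l) (mid : PBlock Λ G) {i : ℕ} {L : List (PBlock Λ G)}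
    (h : i < L.length) (p : ℕ) :
    (tf M a mid i L)[p]? =
      if p < i then (L[p]?).map (pBlockUnd M a)
      else if p = i then some mid
      else (L[p]?).map (pBlockOvr M a) := by
  have hlen : ((L.take i).map (pBlockUnd M a)).length = i := by
    simp only [List.length_map, List.length_take]
    omega
  rw [tf, List.getElem?_append, hlen]
  rcases lt_trichotomy p i with hp | hp | hp
  · rw [if_pos hp, if_pos hp, List.getElem?_map, List.getElem?_take_of_lt hp]
  · subst hp
    simp
  · rw [if_neg (by omega), if_neg (by omega), if_neg (by omega)]
    have h1 : p - i = (p - i - 1) + 1 := by omega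
    rw [h1, List.getElem?_cons_succ, List.getElem?_map, List.getElem?_drop]
    have h2 : i + 1 + (p - i - 1) = p := by omega
    rw [h2]

theorem dTildeAt_ge {Y : Type w} (act : Y → (Σ l, G l) → Y) {i : ℕ}
    {g : Y × List (PBlock Λ G)} (h : ¬ i < g.2.length) :
    dTildeAt M act i g = 0 := by
  unfold dTildeAt
  rw [dif_neg h]

theorem dTildeAt_nil {Y : Type w} (act : Y → (Σ l, G l) → Y) {i : ℕ}
    {g : Y × List (PBlock Λ G)} (h : i < g.2.length) {l : Λ}
    (hb : g.2[i] = ⟨l, ([] : List (G l))⟩) :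
    dTildeAt M act i g = 0 := by
  unfold dTildeAt
  rw [dif_pos h]
  have hb' : g.2.get ⟨i, h⟩ = ⟨l, ([] : List (G l))⟩ := by simpa using hb
  rw [hb']

theorem dTildeAt_pos {Y : Type w} (act : Y → (Σ l, G l) → Y) {i : ℕ}
    {g : Y × List (PBlock Λ G)} (h : i < g.2.length) {l : Λ} {x : G l} {r : List (G l)}
    (hb : g.2[i] = ⟨l, x :: r⟩) :
    dTildeAt M act i g =
      FreeAbelianGroup.of (act g.1 ⟨l, x⟩, tf M ⟨l, x⟩ (midB M l x r) i g.2) := by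
  unfold dTildeAt
  rw [dif_pos h]
  have hb' : g.2.get ⟨i, h⟩ = ⟨l, x :: r⟩ := by simpa using hb
  rw [hb']
  rfl

theorem dHatAt_ge {Y : Type w} {i : ℕ} {g : Y × List (PBlock Λ G)}
    (h : ¬ i < g.2.length) : dHatAt i g = 0 := by
  unfold dHatAt
  rw [dif_neg h]

theorem dHatAt_eq {Y : Type w} {i : ℕ} {g : Y × List (PBlock Λ G)} (h : i < g.2.length) :
    dHatAt i g = ∑ q ∈ Finset.range (g.2[i]).2.length,
      ((-1 : ℤ) ^ (q + 1)) •
        FreeAbelianGroup.of (g.1, g.2.set i ⟨(g.2[i]).1, (g.2[i]).2.eraseIdx q⟩) := by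
  unfold dHatAt
  rw [dif_pos h]
  rw [Fin.sum_univ_eq_sum_range
    (fun q => ((-1 : ℤ) ^ (q + 1)) •
      FreeAbelianGroup.of (g.1, g.2.set i ⟨(g.2.get ⟨i, h⟩).1, (g.2.get ⟨i, h⟩).2.eraseIdx q⟩))]
  simp only [List.get_eq_getElem]



set_option linter.unusedSectionVars false

theorem getElem_of_getElem? {α : Type*} {l : List α} {n : ℕ} (h : n < l.length) {a : α}
    (h2 : l[n]? = some a) : l[n] = a := by
  rw [List.getElem?_eq_getElem h] at h2
  exact Option.some.inj h2

theorem BUU (a b : Σ l, G l) (B : PBlock Λ G) :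
    pBlockUnd M (M.und a b) (pBlockUnd M b B) = pBlockUnd M (M.ovr b a) (pBlockUnd M a B) := by
  apply pblock_ext
  · rw [pBlockUnd_fst M (M.und a b) _ (z := M.und ⟨B.1, (1 : G B.1)⟩ b)
      (pBlockUnd_fst M b B rfl).symm,
      pBlockUnd_fst M (M.ovr b a) _ (z := M.und ⟨B.1, (1 : G B.1)⟩ a)
      (pBlockUnd_fst M a B rfl).symm,
      M.prop.ex_uu]
  · rw [pBlockUnd_toL, pBlockUnd_toL, pBlockUnd_toL, pBlockUnd_toL, List.map_map, List.map_map]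
    exact List.map_congr_left fun z _ => M.prop.ex_uu z b a

theorem BOU (a b : Σ l, G l) (B : PBlock Λ G) :
    pBlockOvr M (M.und a b) (pBlockUnd M b B) = pBlockUnd M (M.ovr b a) (pBlockOvr M a B) := by
  apply pblock_ext
  · rw [pBlockOvr_fst M (M.und a b) _ (z := M.und ⟨B.1, (1 : G B.1)⟩ b)
      (pBlockUnd_fst M b B rfl).symm,
      pBlockUnd_fst M (M.ovr b a) _ (z := M.ovr ⟨B.1, (1 : G B.1)⟩ a)
      (pBlockOvr_fst M a B rfl).symm,
      M.prop.ex_ou]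
  · rw [pBlockOvr_toL, pBlockUnd_toL, pBlockUnd_toL, pBlockOvr_toL, List.map_map, List.map_map]
    exact List.map_congr_left fun z _ => M.prop.ex_ou z b a

theorem BOO (a b : Σ l, G l) (B : PBlock Λ G) :
    pBlockOvr M (M.und a b) (pBlockOvr M b B) = pBlockOvr M (M.ovr b a) (pBlockOvr M a B) := by
  apply pblock_ext
  · rw [pBlockOvr_fst M (M.und a b) _ (z := M.ovr ⟨B.1, (1 : G B.1)⟩ b)
      (pBlockOvr_fst M b B rfl).symm,
      pBlockOvr_fst M (M.ovr b a) _ (z := M.ovr ⟨B.1, (1 : G B.1)⟩ a)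
      (pBlockOvr_fst M a B rfl).symm]
    exact congrArg Sigma.fst (M.prop.ex_oo _ a b).symm
  · rw [pBlockOvr_toL, pBlockOvr_toL, pBlockOvr_toL, pBlockOvr_toL, List.map_map, List.map_map]
    exact List.map_congr_left fun z _ => (M.prop.ex_oo z a b).symm

theorem tf_set_lt (a : Σ l, G l) (mid : PBlock Λ G) {i j : ℕ} {L : List (PBlock Λ G)}
    (h : i < L.length) (hj : j < i) (B : PBlock Λ G) :
    tf M a mid i (L.set j B) = (tf M a mid i L).set j (pBlockUnd M a B) := by
  have h' : i < (L.set j B).length := by simpa using h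
  apply List.ext_getElem?
  intro p
  rw [tf_getElem? M a mid h', List.getElem?_set, List.getElem?_set, tf_getElem? M a mid h]
  by_cases hpj : j = p
  · subst hpj
    rw [if_pos hj, if_pos rfl, if_pos rfl, if_pos (by omega : j < L.length),
      if_pos (by rw [tf_length M a mid h]; omega)]
    rfl
  · rw [if_neg hpj, if_neg hpj]

theorem tf_set_gt (a : Σ l, G l) (mid : PBlock Λ G) {i j : ℕ} {L : List (PBlock Λ G)}
    (h : i < L.length) (hj : i < j) (hjL : j < L.length) (B : PBlock Λ G) :
    tf M a mid i (L.set j B) = (tf M a mid i L).set j (pBlockOvr M a B) := by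
  have h' : i < (L.set j B).length := by simpa using h
  apply List.ext_getElem?
  intro p
  rw [tf_getElem? M a mid h', List.getElem?_set, List.getElem?_set, tf_getElem? M a mid h]
  by_cases hpj : j = p
  · subst hpj
    rw [if_neg (by omega), if_neg (by omega), if_pos rfl, if_pos rfl, if_pos hjL,
      if_pos (by rw [tf_length M a mid h]; omega)]
    rfl
  · rw [if_neg hpj, if_neg hpj]



section Primed

variable {Y : Type w}

theorem dHatAt_ge' {i : ℕ} {y : Y} {L : List (PBlock Λ G)} (h : ¬ i < L.length) :
    dHatAt i (y, L) = 0 := dHatAt_ge h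

theorem dHatAt_eq' {i : ℕ} {y : Y} {L : List (PBlock Λ G)} (h : i < L.length) :
    dHatAt i (y, L) = ∑ q ∈ Finset.range (L[i]).2.length,
      ((-1 : ℤ) ^ (q + 1)) •
        FreeAbelianGroup.of (y, L.set i ⟨(L[i]).1, (L[i]).2.eraseIdx q⟩) :=
  dHatAt_eq h

theorem dTildeAt_ge' (act : Y → (Σ l, G l) → Y) {i : ℕ} {y : Y} {L : List (PBlock Λ G)}
    (h : ¬ i < L.length) : dTildeAt M act i (y, L) = 0 := dTildeAt_ge M act h

theorem dTildeAt_nil' (act : Y → (Σ l, G l) → Y) {i : ℕ} {y : Y} {L : List (PBlock Λ G)}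
    (h : i < L.length) {l : Λ} (hb : L[i] = ⟨l, ([] : List (G l))⟩) :
    dTildeAt M act i (y, L) = 0 := dTildeAt_nil M act h hb

theorem dTildeAt_pos' (act : Y → (Σ l, G l) → Y) {i : ℕ} {y : Y} {L : List (PBlock Λ G)}
    (h : i < L.length) {l : Λ} {x : G l} {r : List (G l)} (hb : L[i] = ⟨l, x :: r⟩) :
    dTildeAt M act i (y, L) =
      FreeAbelianGroup.of (act y ⟨l, x⟩, tf M ⟨l, x⟩ (midB M l x r) i L) :=
  dTildeAt_pos M act h hb

end Primed

open FreeAbelianGroup in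
theorem commHH_aux {Y : Type w} (i j : ℕ) (hij : i ≠ j) (y : Y) (L : List (PBlock Λ G))
    (hi : i < L.length) (hj : j < L.length) :
    FreeAbelianGroup.lift (dHatAt i) (dHatAt j (y, L)) =
      ∑ q ∈ Finset.range ((L[j]).2.length), ∑ p ∈ Finset.range ((L[i]).2.length),
        ((-1 : ℤ) ^ (q + 1)) • (((-1 : ℤ) ^ (p + 1)) •
          FreeAbelianGroup.of
            (y, (L.set j ⟨(L[j]).1, (L[j]).2.eraseIdx q⟩).set i
              ⟨(L[i]).1, (L[i]).2.eraseIdx p⟩)) := by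
  have hset : ∀ B : PBlock Λ G, (L.set j B)[i]'(by simpa using hi) = L[i] :=
    fun B => List.getElem_set_ne (Ne.symm hij) _
  rw [dHatAt_eq' hj, map_sum]
  refine Finset.sum_congr rfl fun q hq => ?_
  erw [map_zsmul, FreeAbelianGroup.lift_apply_of, dHatAt_eq' (lt_of_lt_of_eq hi List.length_set.symm)]
  rw [Finset.smul_sum]
  refine Finset.sum_congr (by erw [hset]) fun p hp => ?_
  erw [hset]

open FreeAbelianGroup in
theorem commHH {Y : Type w} (i j : ℕ) (hij : i ≠ j) (g : Y × List (PBlock Λ G)) :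
    FreeAbelianGroup.lift (dHatAt i) (dHatAt j g) =
      FreeAbelianGroup.lift (dHatAt j) (dHatAt i g) := by
  obtain ⟨y, L⟩ := g
  by_cases hj : j < L.length
  · by_cases hi : i < L.length
    · rw [commHH_aux i j hij y L hi hj, commHH_aux j i hij.symm y L hj hi, Finset.sum_comm]
      refine Finset.sum_congr rfl fun q hq => Finset.sum_congr rfl fun p hp => ?_
      erw [List.set_comm _ _ (show i ≠ j from hij), smul_comm]
    · rw [dHatAt_ge' hi, map_zero, dHatAt_eq' hj, map_sum]
      refine Finset.sum_eq_zero fun q hq => ?_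
      erw [map_zsmul, FreeAbelianGroup.lift_apply_of, dHatAt_ge' (fun h => hi (lt_of_lt_of_eq h List.length_set)), smul_zero]
  · rw [dHatAt_ge' hj, map_zero]
    by_cases hi : i < L.length
    · rw [dHatAt_eq' hi, map_sum]
      refine (Finset.sum_eq_zero fun q hq => ?_).symm
      erw [map_zsmul, FreeAbelianGroup.lift_apply_of, dHatAt_ge' (fun h => hj (lt_of_lt_of_eq h List.length_set)), smul_zero]
    · rw [dHatAt_ge' hi, map_zero]

open FreeAbelianGroup in
theorem commTH {Y : Type w} (act : Y → (Σ l, G l) → Y) (i j : ℕ) (hij : i ≠ j)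
    (g : Y × List (PBlock Λ G)) :
    FreeAbelianGroup.lift (dTildeAt M act i) (dHatAt j g) =
      FreeAbelianGroup.lift (dHatAt j) (dTildeAt M act i g) := by
  obtain ⟨y, L⟩ := g
  by_cases hi : i < L.length
  · rcases hLi : L[i]'hi with ⟨l, _ | ⟨x, r⟩⟩
    · -- block i is empty
      rw [dTildeAt_nil' M act hi hLi, map_zero]
      by_cases hj : j < L.length
      · rw [dHatAt_eq' hj, map_sum]
        refine Finset.sum_eq_zero fun q hq => ?_
        rw [map_zsmul, FreeAbelianGroup.lift_apply_of,
          dTildeAt_nil' M act (L := L.set j ⟨(L[j]).1, (L[j]).2.eraseIdx q⟩)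
            (lt_of_lt_of_eq hi List.length_set.symm)
            (by erw [List.getElem_set_ne (by omega)]; exact hLi),
          smul_zero]
      · rw [dHatAt_ge' hj, map_zero]
    · -- block i is ⟨l, x :: r⟩
      by_cases hj : j < L.length
      · rcases hLj : L[j]'hj with ⟨m, K⟩
        rw [dHatAt_eq' hj, map_sum, dTildeAt_pos' M act hi hLi, FreeAbelianGroup.lift_apply_of,
          dHatAt_eq' (L := tf M ⟨l, x⟩ (midB M l x r) i L)
            (show j < (tf M ⟨l, x⟩ (midB M l x r) i L).length by
              rw [tf_length M _ _ hi]; exact hj)]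
        rcases Nat.lt_or_ge j i with hji | hji
        · -- j < i : block j of tf is pBlockUnd
          have htf : (tf M ⟨l, x⟩ (midB M l x r) i L)[j]'(by rw [tf_length M _ _ hi]; exact hj)
              = pBlockUnd M ⟨l, x⟩ ⟨m, K⟩ := by
            apply getElem_of_getElem?
            rw [tf_getElem? M _ _ hi j, if_pos hji, List.getElem?_eq_getElem hj, hLj]
            rfl
          rw [htf, hLj]
          refine Finset.sum_congr (by simp [pBlockUnd]) fun q hq => ?_
          erw [map_zsmul, FreeAbelianGroup.lift_apply_of,
            dTildeAt_pos' M act (L := L.set j ⟨m, K.eraseIdx q⟩) (lt_of_lt_of_eq hi List.length_set.symm)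
              (by erw [List.getElem_set_ne (by omega)]; exact hLi),
            tf_set_lt M ⟨l, x⟩ (midB M l x r) hi hji]
          have hblock : pBlockUnd M ⟨l, x⟩ ⟨m, K.eraseIdx q⟩
              = ⟨(pBlockUnd M ⟨l, x⟩ ⟨m, K⟩).1, (pBlockUnd M ⟨l, x⟩ ⟨m, K⟩).2.eraseIdx q⟩ := by
            simp only [pBlockUnd]
            exact congrArg _ (map_eraseIdx _ K q)
          rw [hblock]
        · have hji' : i < j := lt_of_le_of_ne hji hij
          have htf : (tf M ⟨l, x⟩ (midB M l x r) i L)[j]'(by rw [tf_length M _ _ hi]; exact hj)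
              = pBlockOvr M ⟨l, x⟩ ⟨m, K⟩ := by
            apply getElem_of_getElem?
            rw [tf_getElem? M _ _ hi j, if_neg (by omega), if_neg (by omega),
              List.getElem?_eq_getElem hj, hLj]
            rfl
          rw [htf, hLj]
          refine Finset.sum_congr (by simp [pBlockOvr]) fun q hq => ?_
          erw [map_zsmul, FreeAbelianGroup.lift_apply_of,
            dTildeAt_pos' M act (L := L.set j ⟨m, K.eraseIdx q⟩) (lt_of_lt_of_eq hi List.length_set.symm)
              (by erw [List.getElem_set_ne (by omega)]; exact hLi),
            tf_set_gt M ⟨l, x⟩ (midB M l x r) hi hji' hj]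
          have hblock : pBlockOvr M ⟨l, x⟩ ⟨m, K.eraseIdx q⟩
              = ⟨(pBlockOvr M ⟨l, x⟩ ⟨m, K⟩).1, (pBlockOvr M ⟨l, x⟩ ⟨m, K⟩).2.eraseIdx q⟩ := by
            simp only [pBlockOvr]
            exact congrArg _ (map_eraseIdx _ K q)
          rw [hblock]
      · rw [dHatAt_ge' hj, map_zero, dTildeAt_pos' M act hi hLi, FreeAbelianGroup.lift_apply_of,
          dHatAt_ge' (show ¬ j < (tf M ⟨l, x⟩ (midB M l x r) i L).length by
            rw [tf_length M _ _ hi]; exact hj)]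
  · rw [dTildeAt_ge' M act hi, map_zero]
    by_cases hj : j < L.length
    · rw [dHatAt_eq' hj, map_sum]
      refine Finset.sum_eq_zero fun q hq => ?_
      erw [map_zsmul, FreeAbelianGroup.lift_apply_of, dTildeAt_ge' M act (fun h => hi (lt_of_lt_of_eq h List.length_set)), smul_zero]
    · rw [dHatAt_ge' hj, map_zero]



open FreeAbelianGroup in
theorem commTT {Y : Type w} (act : Y → (Σ l, G l) → Y)
    (hact : IsMCBAction G M.und M.ovr act) (i j : ℕ) (hij : i < j)
    (g : Y × List (PBlock Λ G)) :
    FreeAbelianGroup.lift (dTildeAt M act i) (dTildeAt M act j g) =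
      FreeAbelianGroup.lift (dTildeAt M act j) (dTildeAt M act i g) := by
  obtain ⟨y, L⟩ := g
  by_cases hj : j < L.length
  case neg =>
    rw [dTildeAt_ge' M act hj, map_zero]
    by_cases hi : i < L.length
    · rcases hLi : L[i]'hi with ⟨l, _ | ⟨x, r⟩⟩
      · rw [dTildeAt_nil' M act hi hLi, map_zero]
      · rw [dTildeAt_pos' M act hi hLi, FreeAbelianGroup.lift_apply_of,
          dTildeAt_ge' M act (show ¬ j < (tf M ⟨l, x⟩ (midB M l x r) i L).length by
            rw [tf_length M _ _ hi]; exact hj)]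
    · rw [dTildeAt_ge' M act hi, map_zero]
  case pos =>
  have hi : i < L.length := hij.trans hj
  rcases hLj : L[j]'hj with ⟨m, _ | ⟨w, s⟩⟩
  · -- block j empty
    rw [dTildeAt_nil' M act hj hLj, map_zero]
    rcases hLi : L[i]'hi with ⟨l, _ | ⟨x, r⟩⟩
    · rw [dTildeAt_nil' M act hi hLi, map_zero]
    · rw [dTildeAt_pos' M act hi hLi, FreeAbelianGroup.lift_apply_of,
        dTildeAt_nil' M act (L := tf M ⟨l, x⟩ (midB M l x r) i L)
          (show j < (tf M ⟨l, x⟩ (midB M l x r) i L).length by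
            rw [tf_length M _ _ hi]; exact hj)
          (l := (M.prop.hom_ovr m ⟨l, x⟩).choose)
          (by
            apply getElem_of_getElem?
            rw [tf_getElem? M _ _ hi j, if_neg (by omega), if_neg (by omega),
              List.getElem?_eq_getElem hj, hLj]
            rfl)]
  · -- block j is ⟨m, w :: s⟩
    rcases hLi : L[i]'hi with ⟨l, _ | ⟨x, r⟩⟩
    · -- block i empty
      rw [dTildeAt_nil' M act hi hLi, map_zero, dTildeAt_pos' M act hj hLj,
        FreeAbelianGroup.lift_apply_of,
        dTildeAt_nil' M act (L := tf M ⟨m, w⟩ (midB M m w s) j L)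
          (show i < (tf M ⟨m, w⟩ (midB M m w s) j L).length by
            rw [tf_length M _ _ hj]; exact hi)
          (l := (M.prop.hom_und l ⟨m, w⟩).choose)
          (by
            apply getElem_of_getElem?
            rw [tf_getElem? M _ _ hj i, if_pos hij, List.getElem?_eq_getElem hi, hLi]
            rfl)]
    · -- main case: block i is ⟨l, x :: r⟩, block j is ⟨m, w :: s⟩
      set l' : Λ := (M.prop.hom_und l ⟨m, w⟩).choose with hl'
      set fU : G l →* G l' := (M.prop.hom_und l ⟨m, w⟩).choose_spec.choose with hfU
      set m' : Λ := (M.prop.hom_ovr m ⟨l, x⟩).choose with hm'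
      set fO : G m →* G m' := (M.prop.hom_ovr m ⟨l, x⟩).choose_spec.choose with hfO
      have hA : M.und ⟨l, x⟩ ⟨m, w⟩ = ⟨l', fU x⟩ := und_spec M l ⟨m, w⟩ x
      have hB : M.ovr ⟨m, w⟩ ⟨l, x⟩ = ⟨m', fO w⟩ := ovr_spec M m ⟨l, x⟩ w
      have hUz : ∀ c : G l, M.und ⟨l, c⟩ ⟨m, w⟩ = ⟨l', fU c⟩ := fun c => und_spec M l ⟨m, w⟩ c
      have hOz : ∀ c : G m, M.ovr ⟨m, c⟩ ⟨l, x⟩ = ⟨m', fO c⟩ := fun c => ovr_spec M m ⟨l, x⟩ c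
      rw [dTildeAt_pos' M act hj hLj, FreeAbelianGroup.lift_apply_of,
        dTildeAt_pos' M act hi hLi, FreeAbelianGroup.lift_apply_of,
        dTildeAt_pos' M act (L := tf M ⟨m, w⟩ (midB M m w s) j L)
          (show i < (tf M ⟨m, w⟩ (midB M m w s) j L).length by
            rw [tf_length M _ _ hj]; exact hi)
          (l := l') (x := fU x) (r := r.map fU)
          (by
            apply getElem_of_getElem?
            rw [tf_getElem? M _ _ hj i, if_pos hij, List.getElem?_eq_getElem hi, hLi]
            rfl),
        dTildeAt_pos' M act (L := tf M ⟨l, x⟩ (midB M l x r) i L)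
          (show j < (tf M ⟨l, x⟩ (midB M l x r) i L).length by
            rw [tf_length M _ _ hi]; exact hj)
          (l := m') (x := fO w) (r := s.map fO)
          (by
            apply getElem_of_getElem?
            rw [tf_getElem? M _ _ hi j, if_neg (by omega), if_neg (by omega),
              List.getElem?_eq_getElem hj, hLj]
            rfl)]
      refine congrArg FreeAbelianGroup.of (Prod.ext ?_ ?_)
      · show act (act y ⟨m, w⟩) ⟨l', fU x⟩ = act (act y ⟨l, x⟩) ⟨m', fO w⟩
        rw [← hA, ← hB]
        exact (hact.act_ex y ⟨l, x⟩ ⟨m, w⟩).symm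
      · show tf M ⟨l', fU x⟩ (midB M l' (fU x) (r.map fU)) i (tf M ⟨m, w⟩ (midB M m w s) j L)
          = tf M ⟨m', fO w⟩ (midB M m' (fO w) (s.map fO)) j (tf M ⟨l, x⟩ (midB M l x r) i L)
        apply List.ext_getElem?
        intro p
        rw [tf_getElem? M ⟨l', fU x⟩ _ (show i < (tf M ⟨m, w⟩ (midB M m w s) j L).length by
            rw [tf_length M _ _ hj]; exact hi) p,
          tf_getElem? M ⟨m', fO w⟩ _ (show j < (tf M ⟨l, x⟩ (midB M l x r) i L).length by
            rw [tf_length M _ _ hi]; exact hj) p,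
          tf_getElem? M ⟨m, w⟩ _ hj p, tf_getElem? M ⟨l, x⟩ _ hi p]
        by_cases hp1 : p < i
        · rw [if_pos hp1, if_pos (hp1.trans hij), if_pos (hp1.trans hij), if_pos hp1,
            Option.map_map, Option.map_map]
          refine congrArg (fun f => Option.map f L[p]?) (funext fun B => ?_)
          show pBlockUnd M ⟨l', fU x⟩ (pBlockUnd M ⟨m, w⟩ B)
            = pBlockUnd M ⟨m', fO w⟩ (pBlockUnd M ⟨l, x⟩ B)
          rw [← hA, ← hB]
          exact BUU M ⟨l, x⟩ ⟨m, w⟩ B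
        · by_cases hp2 : p = i
          · subst hp2
            rw [if_neg hp1, if_pos rfl, if_pos hij, if_neg hp1, if_pos rfl]
            refine congrArg some (pblock_ext ?_ ?_)
            · rw [midB_fst M l' (fU x) (r.map fU) (z := (⟨l', fU x⟩ : Σ l, G l)) rfl,
                pBlockUnd_fst M ⟨m', fO w⟩ (midB M l x r)
                  (z := M.ovr ⟨l, (1 : G l)⟩ ⟨l, x⟩)
                  (midB_fst M l x r (z := (⟨l, (1 : G l)⟩ : Σ l, G l)) rfl).symm,
                ← hA, ← hB, M.prop.ex_ou]
              exact und_fst_congr M (ovr_fst_congr M (z₁ := (⟨l, x⟩ : Σ l, G l))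
                (z₂ := (⟨l, (1 : G l)⟩ : Σ l, G l)) rfl ⟨l, x⟩) (M.ovr ⟨m, w⟩ ⟨l, x⟩)
            · rw [midB_toL, pBlockUnd_toL, midB_toL, List.map_map, List.map_map]
              refine List.map_congr_left fun z _ => ?_
              simp only [Function.comp_apply]
              show M.ovr ⟨l', (fU x)⁻¹ * fU z⟩ ⟨l', fU x⟩
                = M.und (M.ovr ⟨l, x⁻¹ * z⟩ ⟨l, x⟩) ⟨m', fO w⟩
              rw [show (fU x)⁻¹ * fU z = fU (x⁻¹ * z) by rw [← map_inv, ← map_mul],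
                ← hUz, ← hA, M.prop.ex_ou, hB]
          · by_cases hp3 : p < j
            · rw [if_neg hp1, if_neg hp2, if_pos hp3, if_pos hp3, if_neg hp1, if_neg hp2,
                Option.map_map, Option.map_map]
              refine congrArg (fun f => Option.map f L[p]?) (funext fun B => ?_)
              show pBlockOvr M ⟨l', fU x⟩ (pBlockUnd M ⟨m, w⟩ B)
                = pBlockUnd M ⟨m', fO w⟩ (pBlockOvr M ⟨l, x⟩ B)
              rw [← hA, ← hB]
              exact BOU M ⟨l, x⟩ ⟨m, w⟩ B
            · by_cases hp4 : p = j
              · subst hp4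
                rw [if_neg hp1, if_neg hp2, if_neg hp3, if_pos rfl, if_neg hp3, if_pos rfl]
                refine Eq.trans (by rfl :
                    Option.map (pBlockOvr M ⟨l', fU x⟩) (some (midB M m w s))
                      = some (pBlockOvr M ⟨l', fU x⟩ (midB M m w s)))
                  (congrArg some (pblock_ext ?_ ?_))
                · rw [pBlockOvr_fst M ⟨l', fU x⟩ (midB M m w s)
                      (z := M.ovr ⟨m, (1 : G m)⟩ ⟨m, w⟩)
                      (midB_fst M m w s (z := (⟨m, (1 : G m)⟩ : Σ l, G l)) rfl).symm,
                    midB_fst M m' (fO w) (s.map fO) (z := (⟨m', fO w⟩ : Σ l, G l)) rfl,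
                    ← hA, ← hB]
                  exact (congrArg Sigma.fst (M.prop.ex_oo ⟨m, (1 : G m)⟩ ⟨l, x⟩ ⟨m, w⟩)).symm.trans
                    (ovr_fst_congr M (ovr_fst_congr M (z₁ := (⟨m, (1 : G m)⟩ : Σ l, G l))
                      (z₂ := (⟨m, w⟩ : Σ l, G l)) rfl ⟨l, x⟩) (M.ovr ⟨m, w⟩ ⟨l, x⟩))
                · rw [pBlockOvr_toL, midB_toL, midB_toL, List.map_map, List.map_map]
                  refine List.map_congr_left fun z _ => ?_
                  show M.ovr (M.ovr ⟨m, w⁻¹ * z⟩ ⟨m, w⟩) ⟨l', fU x⟩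
                    = M.ovr ⟨m', (fO w)⁻¹ * fO z⟩ ⟨m', fO w⟩
                  rw [show (fO w)⁻¹ * fO z = fO (w⁻¹ * z) by rw [← map_inv, ← map_mul],
                    ← hOz, ← hA, ← hB]
                  exact (M.prop.ex_oo ⟨m, w⁻¹ * z⟩ ⟨l, x⟩ ⟨m, w⟩).symm
              · rw [if_neg hp1, if_neg hp2, if_neg hp3, if_neg hp4, if_neg hp3, if_neg hp4,
                  if_neg hp1, if_neg hp2, Option.map_map, Option.map_map]
                refine congrArg (fun f => Option.map f L[p]?) (funext fun B => ?_)
                show pBlockOvr M ⟨l', fU x⟩ (pBlockOvr M ⟨m, w⟩ B)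
                  = pBlockOvr M ⟨m', fO w⟩ (pBlockOvr M ⟨l, x⟩ B)
                rw [← hA, ← hB]
                exact BOO M ⟨l, x⟩ ⟨m, w⟩ B



open FreeAbelianGroup in
theorem key {Y : Type w} (act : Y → (Σ l, G l) → Y) (hact : IsMCBAction G M.und M.ovr act)
    (i j : ℕ) (hij : i ≠ j) (g : Y × List (PBlock Λ G)) :
    FreeAbelianGroup.lift (dAt M act i) (dAt M act j g) =
      FreeAbelianGroup.lift (dAt M act j) (dAt M act i g) := by
  have hd : ∀ k : ℕ, dAt M act k = (dTildeAt M act k + dHatAt k) := fun k => rfl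
  have hl : ∀ (k : ℕ) (c : FreeAbelianGroup (Y × List (PBlock Λ G))),
      FreeAbelianGroup.lift (dAt M act k) c
        = FreeAbelianGroup.lift (dTildeAt M act k) c + FreeAbelianGroup.lift (dHatAt k) c :=
    fun k c => by rw [hd k]; exact FreeAbelianGroup.lift_add_apply _ _ c
  have hg : ∀ k : ℕ, dAt M act k g = dTildeAt M act k g + dHatAt k g := fun k => rfl
  rw [hl i (dAt M act j g), hl j (dAt M act i g), hg i, hg j, map_add, map_add, map_add,
    map_add, commHH i j hij g, commTH M act i j hij g, ← commTH M act j i hij.symm g]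
  rcases Nat.lt_or_ge i j with h | h
  · rw [commTT M act hact i j h g]
    abel
  · rw [← commTT M act hact j i (lt_of_le_of_ne h hij.symm) g]
    abel

end Stmt10Aux

/-- STATEMENT 10 -/
theorem stmt10 (M : MCB Λ G) {Y : Type w} [Nonempty Y] (act : Y → (Σ l, G l) → Y)
    (hact : IsMCBAction G M.und M.ovr act) :
    ∀ i j : ℕ, i ≠ j →
      ∀ c : FreeAbelianGroup (Y × List (PBlock Λ G)),
        FreeAbelianGroup.lift (dAt M act i) (FreeAbelianGroup.lift (dAt M act j) c)
          = FreeAbelianGroup.lift (dAt M act j) (FreeAbelianGroup.lift (dAt M act i) c) := by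
  intro i j hij c
  refine FreeAbelianGroup.induction_on c (by simp) (fun x => ?_) (fun x hx => ?_)
    (fun u v hu hv => ?_)
  · rw [FreeAbelianGroup.lift_apply_of, FreeAbelianGroup.lift_apply_of]
    exact Stmt10Aux.key M act hact i j hij x
  · simp only [map_neg, hx]
  · simp only [map_add, hu, hv]
end

section
/- Let X be a multiple conjugation biquandle and Y an X-set. Applying the block boundary twice to the same block of a generator of a prismatic chain group gives zero: for any generator ⟨y⟩⟨𝐱₁⟩⋯⟨𝐱_k⟩ and any i ≤ k, ⟨y⟩⟨𝐱₁⟩⋯(∂∘∂)⟨𝐱_i⟩⋯⟨𝐱_k⟩ = 0; more precisely, blockwise one has ∂̃∘∂̃ + ∂̃∘∂̂ + ∂̂∘∂̃ = 0 and ∂̂∘∂̂ = 0. -/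
variable {Λ : Type u} {G : Λ → Type v} [∀ l, Group (G l)]

namespace Stmt12Aux

open FreeAbelianGroup Finset

/-! ### Generic list lemmas -/

theorem eraseIdx_map {α : Type*} {β : Type*} (f : α → β) :
    ∀ (l : List α) (n : ℕ), (l.map f).eraseIdx n = (l.eraseIdx n).map f
  | [], _ => by simp
  | _ :: _, 0 => by simp
  | a :: t, n + 1 => by simp [eraseIdx_map f t n]

theorem eraseIdx_eraseIdx {α : Type*} :
    ∀ (l : List α) (k j : ℕ), k ≤ j →
      (l.eraseIdx (j + 1)).eraseIdx k = (l.eraseIdx k).eraseIdx j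
  | [], _, _, _ => by simp
  | a :: t, 0, j, _ => by simp
  | a :: t, k + 1, j + 1, h => by
      simp only [List.eraseIdx_cons_succ]
      exact congrArg (a :: ·) (eraseIdx_eraseIdx t k j (Nat.le_of_succ_le_succ h))

/-- The basic double-sum simplicial identity for `eraseIdx`. -/
theorem erase2 {α : Type*} {β : Type*} [AddCommGroup β] (g : List α → β) (lst : List α) :
    ∑ j ∈ range lst.length, (-1 : ℤ) ^ (j + 1) •
      ∑ k ∈ range ((lst.eraseIdx j).length), (-1 : ℤ) ^ (k + 1) •
        g ((lst.eraseIdx j).eraseIdx k) = 0 := by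
  have step : ∀ j ∈ range lst.length,
      (-1 : ℤ) ^ (j + 1) • ∑ k ∈ range ((lst.eraseIdx j).length), (-1 : ℤ) ^ (k + 1) •
        g ((lst.eraseIdx j).eraseIdx k)
      = ∑ k ∈ range (lst.length - 1), (-1 : ℤ) ^ (j + k) •
          g ((lst.eraseIdx j).eraseIdx k) := by
    intro j hj
    rw [Finset.smul_sum, List.length_eraseIdx_of_lt (Finset.mem_range.mp hj)]
    refine Finset.sum_congr rfl fun k _ => ?_
    rw [smul_smul, ← pow_add, show j + 1 + (k + 1) = j + k + 2 by ring, pow_add]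
    norm_num
  rw [Finset.sum_congr rfl step, ← Finset.sum_product']
  refine Finset.sum_involution
    (fun p _ => if p.2 < p.1 then (p.2, p.1 - 1) else (p.2 + 1, p.1)) ?_ ?_ ?_ ?_
  · rintro ⟨j, k⟩ hp
    simp only [Finset.mem_product, Finset.mem_range] at hp
    by_cases h : k < j
    · simp only [h, if_pos]
      have h1 : (lst.eraseIdx k).eraseIdx (j - 1) = (lst.eraseIdx j).eraseIdx k := by
        have := (eraseIdx_eraseIdx lst k (j - 1) (by omega)).symm
        rwa [show j - 1 + 1 = j by omega] at this
      rw [h1, ← add_smul, show j + k = k + (j - 1) + 1 by omega, pow_succ]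
      ring_nf
      simp
    · simp only [h, if_neg, not_false_iff]
      have h1 : (lst.eraseIdx (k + 1)).eraseIdx j = (lst.eraseIdx j).eraseIdx k :=
        eraseIdx_eraseIdx lst j k (by omega)
      rw [h1, ← add_smul, show k + 1 + j = j + k + 1 by omega, pow_succ]
      ring_nf
      simp
  · rintro ⟨j, k⟩ hp _
    by_cases h : k < j <;> simp only [h, if_pos, if_neg, not_false_iff] <;>
      intro hc <;> rw [Prod.mk.injEq] at hc <;> omega
  · rintro ⟨j, k⟩ hp
    simp only [Finset.mem_product, Finset.mem_range] at hp ⊢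
    by_cases h : k < j <;> simp only [h, if_pos, if_neg, not_false_iff] <;> omega
  · rintro ⟨j, k⟩ hp
    simp only [Finset.mem_product, Finset.mem_range] at hp
    by_cases h : k < j
    · simp only [h, if_pos]
      have : ¬ (j - 1 < k) := by omega
      simp only [this, if_neg, not_false_iff]
      rw [Prod.mk.injEq]
      omega
    · simp only [h, if_neg, not_false_iff]
      have : j < k + 1 := by omega
      simp only [this, if_pos]
      rw [Prod.mk.injEq]
      omega

/-! ### Block lemmas -/

theorem und_spec (M : MCB Λ G) (l : Λ) (a : Σ l, G l) (u : G l) :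
    M.und ⟨l, u⟩ a = ⟨(M.prop.hom_und l a).choose, (M.prop.hom_und l a).choose_spec.choose u⟩ :=
  (M.prop.hom_und l a).choose_spec.choose_spec u

theorem ovr_spec (M : MCB Λ G) (l : Λ) (a : Σ l, G l) (u : G l) :
    M.ovr ⟨l, u⟩ a = ⟨(M.prop.hom_ovr l a).choose, (M.prop.hom_ovr l a).choose_spec.choose u⟩ :=
  (M.prop.hom_ovr l a).choose_spec.choose_spec u

theorem block_ext : ∀ (b c : PBlock Λ G), b.1 = c.1 →
    b.2.map (Sigma.mk b.1) = c.2.map (Sigma.mk c.1) → b = c := by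
  rintro ⟨l, s⟩ ⟨_, t⟩ rfl h
  have hinj : Function.Injective (Sigma.mk l : G l → Σ l, G l) := sigma_mk_injective
  exact congrArg (Sigma.mk l) (List.map_injective_iff.mpr hinj h)

theorem pBlockUnd_fst (M : MCB Λ G) (a : Σ l, G l) (b : PBlock Λ G) :
    (pBlockUnd M a b).1 = (M.und ⟨b.1, 1⟩ a).1 :=
  (congrArg Sigma.fst (und_spec M b.1 a 1)).symm

theorem pBlockOvr_fst (M : MCB Λ G) (a : Σ l, G l) (b : PBlock Λ G) :
    (pBlockOvr M a b).1 = (M.ovr ⟨b.1, 1⟩ a).1 :=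
  (congrArg Sigma.fst (ovr_spec M b.1 a 1)).symm

theorem pBlockUnd_map (M : MCB Λ G) (a : Σ l, G l) (b : PBlock Λ G) :
    (pBlockUnd M a b).2.map (Sigma.mk (pBlockUnd M a b).1)
      = b.2.map (fun u => M.und ⟨b.1, u⟩ a) := by
  show (b.2.map _).map _ = _
  refine List.map_map.trans ?_
  exact List.map_congr_left fun u _ => (und_spec M b.1 a u).symm

theorem pBlockOvr_map (M : MCB Λ G) (a : Σ l, G l) (b : PBlock Λ G) :
    (pBlockOvr M a b).2.map (Sigma.mk (pBlockOvr M a b).1)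
      = b.2.map (fun u => M.ovr ⟨b.1, u⟩ a) := by
  show (b.2.map _).map _ = _
  refine List.map_map.trans ?_
  exact List.map_congr_left fun u _ => (ovr_spec M b.1 a u).symm

theorem und_one_sigma (M : MCB Λ G) (l : Λ) (a : Σ l, G l) :
    M.und ⟨l, (1 : G l)⟩ a = ⟨(M.und ⟨l, (1 : G l)⟩ a).1, 1⟩ := by
  have h := und_spec M l a 1
  rw [map_one] at h
  rw [h]

theorem ovr_one_sigma (M : MCB Λ G) (l : Λ) (a : Σ l, G l) :
    M.ovr ⟨l, (1 : G l)⟩ a = ⟨(M.ovr ⟨l, (1 : G l)⟩ a).1, 1⟩ := by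
  have h := ovr_spec M l a 1
  rw [map_one] at h
  rw [h]

theorem pBlockUnd_comp (M : MCB Λ G) {X W Z : Σ l, G l}
    (h : ∀ s, M.und (M.und s X) W = M.und s Z) (b : PBlock Λ G) :
    pBlockUnd M W (pBlockUnd M X b) = pBlockUnd M Z b := by
  have key : ∀ (c : PBlock Λ G) (V : Σ l, G l),
      (pBlockUnd M V c).2.map (Sigma.mk (pBlockUnd M V c).1)
        = (c.2.map (Sigma.mk c.1)).map (fun s => M.und s V) := by
    intro c V
    rw [pBlockUnd_map, List.map_map]
    rfl
  apply block_ext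
  · rw [pBlockUnd_fst, pBlockUnd_fst, pBlockUnd_fst, ← und_one_sigma M b.1 X, h]
  · rw [key, key, key, List.map_map]
    exact List.map_congr_left fun s _ => h s

theorem pBlockOvr_comp (M : MCB Λ G) {X W Z : Σ l, G l}
    (h : ∀ s, M.ovr (M.ovr s X) W = M.ovr s Z) (b : PBlock Λ G) :
    pBlockOvr M W (pBlockOvr M X b) = pBlockOvr M Z b := by
  have key : ∀ (c : PBlock Λ G) (V : Σ l, G l),
      (pBlockOvr M V c).2.map (Sigma.mk (pBlockOvr M V c).1)
        = (c.2.map (Sigma.mk c.1)).map (fun s => M.ovr s V) := by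
    intro c V
    rw [pBlockOvr_map, List.map_map]
    rfl
  apply block_ext
  · rw [pBlockOvr_fst, pBlockOvr_fst, pBlockOvr_fst, ← ovr_one_sigma M b.1 X, h]
  · rw [key, key, key, List.map_map]
    exact List.map_congr_left fun s _ => h s

/-! ### Computation of the boundary operators on generators -/

theorem append_cons_length {B A : List (PBlock Λ G)} {bl : PBlock Λ G} {i : ℕ}
    (hi : i = B.length) : i < (B ++ bl :: A).length := by
  simp [hi]

theorem append_cons_get {B A : List (PBlock Λ G)} {bl : PBlock Λ G} {i : ℕ}
    (hi : i = B.length) (h : i < (B ++ bl :: A).length) :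
    (B ++ bl :: A).get ⟨i, h⟩ = bl := by
  subst hi
  simp [List.getElem_append_right (Nat.le_refl B.length)]

theorem append_cons_drop {B A : List (PBlock Λ G)} {bl : PBlock Λ G} {i : ℕ}
    (hi : i = B.length) : (B ++ bl :: A).drop (i + 1) = A := by
  subst hi
  rw [show B ++ bl :: A = (B ++ [bl]) ++ A by simp]
  exact List.drop_left' (by simp)

theorem append_cons_take {B A : List (PBlock Λ G)} {bl : PBlock Λ G} {i : ℕ}
    (hi : i = B.length) : (B ++ bl :: A).take i = B := by
  subst hi
  exact List.take_left

theorem append_cons_set {B A : List (PBlock Λ G)} {bl bl' : PBlock Λ G} {i : ℕ}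
    (hi : i = B.length) : (B ++ bl :: A).set i bl' = B ++ bl' :: A := by
  subst hi
  rw [List.set_append_right _ _ (Nat.le_refl B.length), Nat.sub_self]
  rfl

theorem dTildeAt_nil (M : MCB Λ G) {Y : Type w} (act : Y → (Σ l, G l) → Y) (y : Y)
    {i : ℕ} (B A : List (PBlock Λ G)) (hi : i = B.length) (l : Λ) :
    dTildeAt M act i (y, (B ++ ⟨l, []⟩ :: A : List (PBlock Λ G))) = 0 := by
  have hlen : i < (B ++ ⟨l, []⟩ :: A : List (PBlock Λ G)).length := append_cons_length hi
  unfold dTildeAt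
  rw [dif_pos hlen]
  split
  · rfl
  · rename_i l' x' rest' heq
    replace heq := (append_cons_get hi hlen).symm.trans heq
    exact absurd (congrArg (fun b : PBlock Λ G => b.2.length) heq.symm) (by simp)

theorem dTildeAt_of (M : MCB Λ G) {Y : Type w} (act : Y → (Σ l, G l) → Y) (y : Y)
    {i : ℕ} (B A : List (PBlock Λ G)) (hi : i = B.length) (l : Λ) (x : G l)
    (rest : List (G l)) :
    dTildeAt M act i (y, (B ++ ⟨l, x :: rest⟩ :: A : List (PBlock Λ G)))
      = FreeAbelianGroup.of (act y ⟨l, x⟩,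
          B.map (pBlockUnd M ⟨l, x⟩)
            ++ pBlockOvr M ⟨l, x⟩ ⟨l, rest.map (fun z => x⁻¹ * z)⟩
              :: A.map (pBlockOvr M ⟨l, x⟩)) := by
  have hlen : i < (B ++ ⟨l, x :: rest⟩ :: A : List (PBlock Λ G)).length := append_cons_length hi
  unfold dTildeAt
  rw [dif_pos hlen]
  split
  · rename_i heq
    replace heq := (append_cons_get hi hlen).symm.trans heq
    exact absurd (congrArg (fun b : PBlock Λ G => b.2.length) heq) (by simp)
  · rename_i l' x' rest' heq
    replace heq := (append_cons_get hi hlen).symm.trans heq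
    obtain ⟨rfl, h2⟩ := Sigma.mk.inj_iff.mp heq
    obtain ⟨rfl, rfl⟩ := List.cons.inj (eq_of_heq h2)
    erw [append_cons_take hi, append_cons_drop hi]
    simp [pBlockOvr, List.map_map, Function.comp_def]

theorem dHatAt_of {Y : Type w} (y : Y) {i : ℕ} (B A : List (PBlock Λ G))
    (hi : i = B.length) (l : Λ) (lst : List (G l)) :
    dHatAt i (y, (B ++ ⟨l, lst⟩ :: A : List (PBlock Λ G)))
      = ∑ j ∈ range lst.length, ((-1 : ℤ) ^ (j + 1)) •
          FreeAbelianGroup.of (y, (B ++ ⟨l, lst.eraseIdx j⟩ :: A : List (PBlock Λ G))) := by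
  have hlen : i < (B ++ ⟨l, lst⟩ :: A : List (PBlock Λ G)).length := append_cons_length hi
  unfold dHatAt
  rw [dif_pos hlen]
  dsimp only
  generalize hg : (B ++ ⟨l, lst⟩ :: A).get ⟨i, hlen⟩ = bl
  rw [append_cons_get hi hlen] at hg
  subst hg
  dsimp only
  rw [← Fin.sum_univ_eq_sum_range]
  refine Finset.sum_congr rfl fun j _ => ?_
  exact congrArg (fun L => (-1 : ℤ) ^ ((j : ℕ) + 1) • FreeAbelianGroup.of (y, L))
    (append_cons_set hi)

/-! ### The key per-generator identities -/

theorem keyB {Y : Type w} (y : Y) {i : ℕ} (B A : List (PBlock Λ G))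
    (hi : i = B.length) (l : Λ) (lst : List (G l)) :
    FreeAbelianGroup.lift (dHatAt i)
        (dHatAt i (y, (B ++ ⟨l, lst⟩ :: A : List (PBlock Λ G)))) = 0 := by
  rw [dHatAt_of y B A hi l lst, map_sum]
  have step : ∀ j ∈ range lst.length,
      FreeAbelianGroup.lift (dHatAt i) ((-1 : ℤ) ^ (j + 1) •
          FreeAbelianGroup.of (y, (B ++ ⟨l, lst.eraseIdx j⟩ :: A : List (PBlock Λ G))))
        = (-1 : ℤ) ^ (j + 1) •
            ∑ k ∈ range ((lst.eraseIdx j).length), ((-1 : ℤ) ^ (k + 1)) •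
              FreeAbelianGroup.of
                (y, (B ++ ⟨l, (lst.eraseIdx j).eraseIdx k⟩ :: A : List (PBlock Λ G))) := by
    intro j _
    rw [map_zsmul, FreeAbelianGroup.lift_apply_of, dHatAt_of y B A hi l (lst.eraseIdx j)]
  rw [Finset.sum_congr rfl step]
  exact erase2 (fun t => FreeAbelianGroup.of
    (y, (B ++ ⟨l, t⟩ :: A : List (PBlock Λ G)))) lst

theorem rearr {β : Type*} [AddCommGroup β] (a b c d : β)
    (h1 : a + b = 0) (h2 : c + d = 0) : a + (c + b) + d = 0 := by
  have : a + (c + b) + d = (a + b) + (c + d) := by abel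
  rw [this, h1, h2, add_zero]

theorem keyA (M : MCB Λ G) {Y : Type w} (act : Y → (Σ l, G l) → Y)
    (hact : IsMCBAction G M.und M.ovr act) (y : Y) {i : ℕ} (B A : List (PBlock Λ G))
    (hi : i = B.length) (l : Λ) (lst : List (G l)) :
    FreeAbelianGroup.lift (dTildeAt M act i)
        (dTildeAt M act i (y, (B ++ ⟨l, lst⟩ :: A : List (PBlock Λ G))))
      + FreeAbelianGroup.lift (dTildeAt M act i)
          (dHatAt i (y, (B ++ ⟨l, lst⟩ :: A : List (PBlock Λ G))))
      + FreeAbelianGroup.lift (dHatAt i)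
          (dTildeAt M act i (y, (B ++ ⟨l, lst⟩ :: A : List (PBlock Λ G)))) = 0 := by
  match lst with
  | [] =>
    rw [dTildeAt_nil M act y B A hi l, dHatAt_of y B A hi l []]
    simp
  | x :: rest =>
    have hblock : ∀ t : List (G l), pBlockOvr M ⟨l, x⟩ ⟨l, t⟩
        = ⟨(M.prop.hom_ovr l ⟨l, x⟩).choose,
            t.map ⇑((M.prop.hom_ovr l ⟨l, x⟩).choose_spec.choose)⟩ := fun _ => rfl
    have hi' : i = (B.map (pBlockUnd M ⟨l, x⟩)).length := by
      rw [List.length_map]; exact hi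
    rw [dTildeAt_of M act y B A hi l x rest, dHatAt_of y B A hi l (x :: rest)]
    simp only [map_sum, map_zsmul, FreeAbelianGroup.lift_apply_of, List.length_cons]
    rw [hblock]
    rw [dHatAt_of (act y ⟨l, x⟩) (B.map (pBlockUnd M ⟨l, x⟩))
      (A.map (pBlockOvr M ⟨l, x⟩)) hi']
    simp only [List.length_map, eraseIdx_map]
    rw [Finset.sum_range_succ']
    simp only [List.eraseIdx_cons_succ, List.eraseIdx_cons_zero]
    refine rearr _ _ _ _ ?_ ?_
    · -- key1 : dT g₁ + (-1)^(0+1) • dT (y, B ++ ⟨l, rest⟩ :: A) = 0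
      match rest with
      | [] =>
        rw [show (([] : List (G l)).map (fun z => x⁻¹ * z)).map
            ⇑((M.prop.hom_ovr l ⟨l, x⟩).choose_spec.choose) = [] by simp]
        rw [dTildeAt_nil M act (act y ⟨l, x⟩) (B.map (pBlockUnd M ⟨l, x⟩))
          (A.map (pBlockOvr M ⟨l, x⟩)) hi', dTildeAt_nil M act y B A hi l]
        simp
      | z :: rest2 =>
        rw [show ((z :: rest2 : List (G l)).map (fun u => x⁻¹ * u)).map
            ⇑((M.prop.hom_ovr l ⟨l, x⟩).choose_spec.choose)
          = ((M.prop.hom_ovr l ⟨l, x⟩).choose_spec.choose (x⁻¹ * z))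
              :: ((rest2.map (fun u => x⁻¹ * u)).map
                  ⇑((M.prop.hom_ovr l ⟨l, x⟩).choose_spec.choose)) by simp]
        rw [dTildeAt_of M act (act y ⟨l, x⟩) (B.map (pBlockUnd M ⟨l, x⟩))
          (A.map (pBlockOvr M ⟨l, x⟩)) hi',
          dTildeAt_of M act y B A hi l z rest2]
        have hW : (⟨(M.prop.hom_ovr l ⟨l, x⟩).choose,
            (M.prop.hom_ovr l ⟨l, x⟩).choose_spec.choose (x⁻¹ * z)⟩ : Σ l, G l)
            = M.ovr ⟨l, x⁻¹ * z⟩ ⟨l, x⟩ := (ovr_spec M l ⟨l, x⟩ (x⁻¹ * z)).symm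
        have hund : ∀ s, M.und (M.und s ⟨l, x⟩) (M.ovr ⟨l, x⁻¹ * z⟩ ⟨l, x⟩)
            = M.und s ⟨l, z⟩ := by
          intro s
          rw [← M.prop.und_mul l x (x⁻¹ * z) s, mul_inv_cancel_left]
        have hovr : ∀ s, M.ovr (M.ovr s ⟨l, x⟩) (M.ovr ⟨l, x⁻¹ * z⟩ ⟨l, x⟩)
            = M.ovr s ⟨l, z⟩ := by
          intro s
          rw [← M.prop.ovr_mul l x (x⁻¹ * z) s, mul_inv_cancel_left]
        have hmain : (act (act y ⟨l, x⟩) (M.ovr ⟨l, x⁻¹ * z⟩ ⟨l, x⟩),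
            (B.map (pBlockUnd M ⟨l, x⟩)).map (pBlockUnd M (M.ovr ⟨l, x⁻¹ * z⟩ ⟨l, x⟩))
              ++ pBlockOvr M (M.ovr ⟨l, x⁻¹ * z⟩ ⟨l, x⟩)
                  ⟨(M.prop.hom_ovr l ⟨l, x⟩).choose,
                    ((rest2.map (fun u => x⁻¹ * u)).map
                        ⇑((M.prop.hom_ovr l ⟨l, x⟩).choose_spec.choose)).map
                      (fun u => ((M.prop.hom_ovr l ⟨l, x⟩).choose_spec.choose
                        (x⁻¹ * z))⁻¹ * u)⟩
                :: (A.map (pBlockOvr M ⟨l, x⟩)).map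
                      (pBlockOvr M (M.ovr ⟨l, x⁻¹ * z⟩ ⟨l, x⟩)))
            = (act y ⟨l, z⟩,
              B.map (pBlockUnd M ⟨l, z⟩)
                ++ pBlockOvr M ⟨l, z⟩ ⟨l, rest2.map (fun u => z⁻¹ * u)⟩
                  :: A.map (pBlockOvr M ⟨l, z⟩)) := by
          refine Prod.ext ?_ ?_
          · show act (act y ⟨l, x⟩) (M.ovr ⟨l, x⁻¹ * z⟩ ⟨l, x⟩) = act y ⟨l, z⟩
            rw [← hact.act_mul y l x (x⁻¹ * z), mul_inv_cancel_left]
          · show _ ++ _ :: _ = _ ++ _ :: _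
            refine congrArg₂ _ ?_ (congrArg₂ _ ?_ ?_)
            · rw [List.map_map]
              exact List.map_congr_left fun b _ => pBlockUnd_comp M hund b
            · have hmid : ((rest2.map (fun u => x⁻¹ * u)).map
                  ⇑((M.prop.hom_ovr l ⟨l, x⟩).choose_spec.choose)).map
                    (fun u => ((M.prop.hom_ovr l ⟨l, x⟩).choose_spec.choose
                      (x⁻¹ * z))⁻¹ * u)
                  = (rest2.map (fun u => z⁻¹ * u)).map
                      ⇑((M.prop.hom_ovr l ⟨l, x⟩).choose_spec.choose) := by
                simp only [List.map_map]
                refine List.map_congr_left fun u _ => ?_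
                show ((M.prop.hom_ovr l ⟨l, x⟩).choose_spec.choose (x⁻¹ * z))⁻¹
                    * ((M.prop.hom_ovr l ⟨l, x⟩).choose_spec.choose (x⁻¹ * u))
                  = (M.prop.hom_ovr l ⟨l, x⟩).choose_spec.choose (z⁻¹ * u)
                rw [← map_inv, ← map_mul]
                congr 1
                group
              rw [hmid, ← hblock (rest2.map (fun u => z⁻¹ * u))]
              exact pBlockOvr_comp M hovr ⟨l, rest2.map (fun u => z⁻¹ * u)⟩
            · rw [List.map_map]
              exact List.map_congr_left fun b _ => pBlockOvr_comp M hovr b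
        rw [← hW] at hmain
        rw [hmain]
        simp
    · -- key2 : tail sum + dHat sum = 0
      simp only [dTildeAt_of M act y B A hi l x, hblock]
      rw [← Finset.sum_add_distrib]
      refine Finset.sum_eq_zero fun j _ => ?_
      rw [← add_smul, show ((-1 : ℤ) ^ (j + 1 + 1) + (-1 : ℤ) ^ (j + 1)) = 0 by
        rw [pow_succ]; ring, zero_smul]

/-! ### Assembly -/

theorem dTildeAt_zero (M : MCB Λ G) {Y : Type w} (act : Y → (Σ l, G l) → Y) (i : ℕ)
    (g : Y × List (PBlock Λ G)) (h : ¬ i < g.2.length) : dTildeAt M act i g = 0 :=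
  dif_neg h

theorem dHatAt_zero {Y : Type w} (i : ℕ) (g : Y × List (PBlock Λ G))
    (h : ¬ i < g.2.length) : dHatAt i g = 0 :=
  dif_neg h

theorem mainA (M : MCB Λ G) {Y : Type w} (act : Y → (Σ l, G l) → Y)
    (hact : IsMCBAction G M.und M.ovr act) (i : ℕ) (g : Y × List (PBlock Λ G)) :
    FreeAbelianGroup.lift (dTildeAt M act i) (dTildeAt M act i g)
      + FreeAbelianGroup.lift (dTildeAt M act i) (dHatAt i g)
      + FreeAbelianGroup.lift (dHatAt i) (dTildeAt M act i g) = 0 := by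
  obtain ⟨y, L⟩ := g
  by_cases h : i < L.length
  · have h1 : L.take i ++ L.drop i = L := List.take_append_drop i L
    rw [List.drop_eq_getElem_cons h] at h1
    have hi : i = (L.take i).length := by rw [List.length_take]; omega
    rcases hbl : L[i]'h with ⟨l, lst⟩
    rw [hbl] at h1
    rw [← h1]
    exact keyA M act hact y (L.take i) (L.drop (i + 1)) hi l lst
  · rw [dTildeAt_zero M act i (y, L) h, dHatAt_zero i (y, L) h]
    simp

theorem mainB {Y : Type w} (i : ℕ) (g : Y × List (PBlock Λ G)) :
    FreeAbelianGroup.lift (dHatAt i) (dHatAt i g) = 0 := by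
  obtain ⟨y, L⟩ := g
  by_cases h : i < L.length
  · have h1 : L.take i ++ L.drop i = L := List.take_append_drop i L
    rw [List.drop_eq_getElem_cons h] at h1
    have hi : i = (L.take i).length := by rw [List.length_take]; omega
    rcases hbl : L[i]'h with ⟨l, lst⟩
    rw [hbl] at h1
    rw [← h1]
    exact keyB y (L.take i) (L.drop (i + 1)) hi l lst
  · rw [dHatAt_zero i (y, L) h]
    simp

theorem rearr6 {β : Type*} [AddCommGroup β] (a b c d e f : β)
    (h1 : a + c + e = 0) (h2 : b + d + f = 0) : a + b + (c + d) + (e + f) = 0 := by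
  have : a + b + (c + d) + (e + f) = (a + c + e) + (b + d + f) := by abel
  rw [this, h1, h2, add_zero]

theorem part2 (M : MCB Λ G) {Y : Type w} (act : Y → (Σ l, G l) → Y)
    (hact : IsMCBAction G M.und M.ovr act) (i : ℕ)
    (c : FreeAbelianGroup (Y × List (PBlock Λ G))) :
    FreeAbelianGroup.lift (dTildeAt M act i) (FreeAbelianGroup.lift (dTildeAt M act i) c)
      + FreeAbelianGroup.lift (dTildeAt M act i) (FreeAbelianGroup.lift (dHatAt i) c)
      + FreeAbelianGroup.lift (dHatAt i) (FreeAbelianGroup.lift (dTildeAt M act i) c)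
      = 0 := by
  refine FreeAbelianGroup.induction_on c ?_ ?_ ?_ ?_
  · simp
  · intro g
    rw [FreeAbelianGroup.lift_apply_of, FreeAbelianGroup.lift_apply_of]
    exact mainA M act hact i g
  · intro g hg
    simp only [map_neg, ← neg_add]
    rw [hg, neg_zero]
  · intro u v hu hv
    simp only [map_add]
    exact rearr6 _ _ _ _ _ _ hu hv

theorem part3 {Y : Type w} (i : ℕ) (c : FreeAbelianGroup (Y × List (PBlock Λ G))) :
    FreeAbelianGroup.lift (dHatAt i) (FreeAbelianGroup.lift (dHatAt i) c) = 0 := by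
  refine FreeAbelianGroup.induction_on c ?_ ?_ ?_ ?_
  · simp
  · intro g
    rw [FreeAbelianGroup.lift_apply_of]
    exact mainB i g
  · intro g hg
    rw [map_neg, map_neg, hg, neg_zero]
  · intro u v hu hv
    rw [map_add, map_add, hu, hv, add_zero]

theorem rearr4 {β : Type*} [AddCommGroup β] (a b c d : β)
    (h1 : a + c + b = 0) (h2 : d = 0) : a + b + (c + d) = 0 := by
  rw [h2, add_zero, show a + b + c = a + c + b by abel, h1]

theorem part1 (M : MCB Λ G) {Y : Type w} (act : Y → (Σ l, G l) → Y)
    (hact : IsMCBAction G M.und M.ovr act) (i : ℕ)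
    (c : FreeAbelianGroup (Y × List (PBlock Λ G))) :
    FreeAbelianGroup.lift (dAt M act i) (FreeAbelianGroup.lift (dAt M act i) c) = 0 := by
  have hsplit : ∀ d : FreeAbelianGroup (Y × List (PBlock Λ G)),
      FreeAbelianGroup.lift (dAt M act i) d
        = FreeAbelianGroup.lift (dTildeAt M act i) d
          + FreeAbelianGroup.lift (dHatAt i) d := by
    intro d
    have hfun : dAt M act i = (dTildeAt M act i) + (dHatAt i) := rfl
    rw [hfun]
    exact FreeAbelianGroup.lift_add_apply _ _ d
  rw [hsplit c, map_add, hsplit, hsplit]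
  exact rearr4 _ _ _ _ (part2 M act hact i c) (part3 i c)

end Stmt12Aux

/-- STATEMENT 12 -/
theorem stmt12 (M : MCB Λ G) {Y : Type w} [Nonempty Y] (act : Y → (Σ l, G l) → Y)
    (hact : IsMCBAction G M.und M.ovr act) :
    (∀ (i : ℕ) (c : FreeAbelianGroup (Y × List (PBlock Λ G))),
        FreeAbelianGroup.lift (dAt M act i) (FreeAbelianGroup.lift (dAt M act i) c) = 0) ∧
    (∀ (i : ℕ) (c : FreeAbelianGroup (Y × List (PBlock Λ G))),
        FreeAbelianGroup.lift (dTildeAt M act i) (FreeAbelianGroup.lift (dTildeAt M act i) c)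
          + FreeAbelianGroup.lift (dTildeAt M act i) (FreeAbelianGroup.lift (dHatAt i) c)
          + FreeAbelianGroup.lift (dHatAt i) (FreeAbelianGroup.lift (dTildeAt M act i) c) = 0) ∧
    (∀ (i : ℕ) (c : FreeAbelianGroup (Y × List (PBlock Λ G))),
        FreeAbelianGroup.lift (dHatAt i) (FreeAbelianGroup.lift (dHatAt i) c) = 0) :=
  ⟨fun i c => Stmt12Aux.part1 M act hact i c,
   fun i c => Stmt12Aux.part2 M act hact i c,
   fun i c => Stmt12Aux.part3 i c⟩
end
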